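/- arXiv:1110.4977 — 7 statements merged into one kernel-verified Lean document; each statement's English description precedes it below -/
import Mathlib

section
/- Let G be a simple graph with an alternating 4-cycle ⟨a,b:c,d⟩, and let H be the graph obtained from G by the 2-switch on ⟨a,b:c,d⟩. If every vertex u ∉ {a,b,c,d} is adjacent to both of a,c or to neither of a,c, then the transposition of a and c (fixing all other vertices) is a graph isomorphism from G to H; in particular G ≅ H. -/
open SimpleGraph

/-- An alternating 4-cycle ⟨a,b:c,d⟩: four distinct vertices with ab, cd edges
and bc, ad non-edges. -/
def A4 {V : Type*} (G : SimpleGraph V) (a b c d : V) : Prop :=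
  a ≠ b ∧ a ≠ c ∧ a ≠ d ∧ b ≠ c ∧ b ≠ d ∧ c ≠ d ∧
  G.Adj a b ∧ G.Adj c d ∧ ¬ G.Adj b c ∧ ¬ G.Adj a d

/-- The 2-switch on ⟨a,b:c,d⟩: delete edges ab, cd and add edges bc, ad. -/
def twoSwitch {V : Type*} (G : SimpleGraph V) (a b c d : V) : SimpleGraph V :=
  SimpleGraph.fromEdgeSet ((G.edgeSet \ {s(a,b), s(c,d)}) ∪ {s(b,c), s(a,d)})

set_option maxHeartbeats 1000000 in
set_option linter.unnecessarySeqFocus false in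
theorem swap_key {V : Type*} [DecidableEq V] (G : SimpleGraph V) (a b c d : V)
    (h : A4 G a b c d)
    (hmod : ∀ u : V, u ∉ ({a, b, c, d} : Set V) → (G.Adj u a ↔ G.Adj u c)) :
    ∀ x y : V, G.Adj x y ↔
        (twoSwitch G a b c d).Adj (Equiv.swap a c x) (Equiv.swap a c y) := by
  obtain ⟨hab, hac, had, hbc, hbd, hcd, Gab, Gcd, nGbc, nGad⟩ := h
  have Hadj : ∀ x y : V, (twoSwitch G a b c d).Adj x y ↔
      (((G.Adj x y ∧ ¬(x = a ∧ y = b ∨ x = b ∧ y = a) ∧ ¬(x = c ∧ y = d ∨ x = d ∧ y = c))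
        ∨ (x = b ∧ y = c ∨ x = c ∧ y = b) ∨ (x = a ∧ y = d ∨ x = d ∧ y = a)) ∧ x ≠ y) := by
    intro x y
    rw [twoSwitch, fromEdgeSet_adj]
    simp only [Set.mem_union, Set.mem_diff, Set.mem_insert_iff, Set.mem_singleton_iff,
      mem_edgeSet, Sym2.eq_iff, not_or]
  have sm : ∀ u : V, u ≠ a → u ≠ b → u ≠ c → u ≠ d → (G.Adj u a ↔ G.Adj u c) := by
    intro u h1 h2 h3 h4
    exact hmod u (by simp [h1, h2, h3, h4])
  clear hmod
  intro x y
  have hx5 : x = a ∨ x = b ∨ x = c ∨ x = d ∨ (x ≠ a ∧ x ≠ b ∧ x ≠ c ∧ x ≠ d) := by tauto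
  have hy5 : y = a ∨ y = b ∨ y = c ∨ y = d ∨ (y ≠ a ∧ y ≠ b ∧ y ≠ c ∧ y ≠ d) := by tauto
  have Gba := G.adj_symm Gab
  have Gdc := G.adj_symm Gcd
  have nGcb : ¬ G.Adj c b := fun h => nGbc (G.adj_symm h)
  have nGda : ¬ G.Adj d a := fun h => nGad (G.adj_symm h)
  have smx := sm x
  have smy := sm y
  have smx' : ∀ (h1 : x ≠ a) (h2 : x ≠ b) (h3 : x ≠ c) (h4 : x ≠ d), G.Adj a x ↔ G.Adj c x := by
    intro h1 h2 h3 h4; rw [G.adj_comm a x, G.adj_comm c x]; exact smx h1 h2 h3 h4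
  have smy' : ∀ (h1 : y ≠ a) (h2 : y ≠ b) (h3 : y ≠ c) (h4 : y ≠ d), G.Adj a y ↔ G.Adj c y := by
    intro h1 h2 h3 h4; rw [G.adj_comm a y, G.adj_comm c y]; exact smy h1 h2 h3 h4
  clear sm
  have hGxy : G.Adj x y → x ≠ y := G.ne_of_adj
  rcases hx5 with rfl|rfl|rfl|rfl|⟨h1,h2,h3,h4⟩ <;>
    rcases hy5 with rfl|rfl|rfl|rfl|⟨g1,g2,g3,g4⟩ <;>
    simp_all [Hadj, Equiv.swap_apply_left, Equiv.swap_apply_right,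
      Equiv.swap_apply_of_ne_of_ne, ne_comm, G.adj_comm] <;> tauto

theorem stmt_1 {V : Type*} [DecidableEq V] (G : SimpleGraph V) (a b c d : V)
    (h : A4 G a b c d)
    (hmod : ∀ u : V, u ∉ ({a, b, c, d} : Set V) → (G.Adj u a ↔ G.Adj u c)) :
    (∀ x y : V, G.Adj x y ↔
        (twoSwitch G a b c d).Adj (Equiv.swap a c x) (Equiv.swap a c y)) ∧
      Nonempty (G ≃g twoSwitch G a b c d) := by
  have key := swap_key G a b c d h hmod
  exact ⟨key, ⟨⟨Equiv.swap a c, fun {x y} => (key x y).symm⟩⟩⟩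
end

section
/- Let G be a simple graph with an alternating 4-cycle ⟨a,b:c,d⟩, and let H be the graph obtained from G by the 2-switch on ⟨a,b:c,d⟩. If every vertex u ∉ {a,b,c,d} is adjacent to both of b,d or to neither of b,d, then the transposition of b and d (fixing all other vertices) is a graph isomorphism from G to H; in particular G ≅ H. -/
open SimpleGraph

set_option maxHeartbeats 2000000 in
theorem stmt_2 {V : Type*} [DecidableEq V] (G : SimpleGraph V) (a b c d : V)
    (h : A4 G a b c d)
    (hmod : ∀ u : V, u ∉ ({a, b, c, d} : Set V) → (G.Adj u b ↔ G.Adj u d)) :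
    (∀ x y : V, G.Adj x y ↔
        (twoSwitch G a b c d).Adj (Equiv.swap b d x) (Equiv.swap b d y)) ∧
      Nonempty (G ≃g twoSwitch G a b c d) := by
  obtain ⟨hab, hac, had, hbc, hbd, hcd, Gab, Gcd, nGbc, nGad⟩ := h
  have hm : ∀ u, u ≠ a → u ≠ b → u ≠ c → u ≠ d → (G.Adj u b ↔ G.Adj u d) := by
    intro u h1 h2 h3 h4; exact hmod u (by simp [h1, h2, h3, h4])
  have key : ∀ x y : V, G.Adj x y ↔
      (twoSwitch G a b c d).Adj (Equiv.swap b d x) (Equiv.swap b d y) := by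
    intro x y
    have hm2 : ∀ u, u ≠ a → u ≠ b → u ≠ c → u ≠ d → (G.Adj b u ↔ G.Adj d u) := by
      intro u h1 h2 h3 h4
      rw [G.adj_comm b u, G.adj_comm d u]; exact hm u h1 h2 h3 h4
    have hmx := hm x
    have hmy := hm y
    have hmx2 := hm2 x
    have hmy2 := hm2 y
    have hGxy : G.Adj x y ↔ G.Adj y x := ⟨Adj.symm, Adj.symm⟩
    have hne1 : G.Adj x y → ¬ x = y := Adj.ne
    have hne2 : G.Adj y x → ¬ y = x := Adj.ne
    simp only [twoSwitch, fromEdgeSet_adj, Set.mem_union, Set.mem_diff,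
      Set.mem_insert_iff, Set.mem_singleton_iff, mem_edgeSet, Sym2.eq_iff,
      Equiv.swap_apply_def]
    rcases eq_or_ne x a with hxa | hxa <;>
    rcases eq_or_ne x b with hxb | hxb <;>
    rcases eq_or_ne x c with hxc | hxc <;>
    rcases eq_or_ne x d with hxd | hxd <;>
    rcases eq_or_ne y a with hya | hya <;>
    rcases eq_or_ne y b with hyb | hyb <;>
    rcases eq_or_ne y c with hyc | hyc <;>
    rcases eq_or_ne y d with hyd | hyd <;>
      simp_all <;> tauto
  refine ⟨key, ⟨⟨Equiv.swap b d, ?_⟩⟩⟩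
  intro x y
  exact (key x y).symm
end

section
/- Let G be a simple graph with an alternating 4-cycle ⟨a,b:c,d⟩ and let H be the result of the 2-switch on ⟨a,b:c,d⟩. If H is not isomorphic to G, then there exist vertices u, v ∉ {a,b,c,d} (possibly u = v) such that u is adjacent to exactly one of a, c and v is adjacent to exactly one of b, d. -/
open SimpleGraph

lemma twoSwitch_adj {V : Type*} (G : SimpleGraph V) (a b c d x y : V) :
    (twoSwitch G a b c d).Adj x y ↔
      ((G.Adj x y ∧ ¬((x = a ∧ y = b) ∨ (x = b ∧ y = a)) ∧
        ¬((x = c ∧ y = d) ∨ (x = d ∧ y = c))) ∨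
       ((x = b ∧ y = c) ∨ (x = c ∧ y = b)) ∨ ((x = a ∧ y = d) ∨ (x = d ∧ y = a))) ∧ x ≠ y := by
  simp only [twoSwitch, fromEdgeSet_adj, Set.mem_union, Set.mem_diff, Set.mem_insert_iff,
    Set.mem_singleton_iff, mem_edgeSet, Sym2.eq, Sym2.rel_iff', Prod.mk.injEq,
    Prod.swap_prod_mk, not_or]

set_option maxHeartbeats 1000000 in
noncomputable def isoSwap {V : Type*} (G : SimpleGraph V) (a b c d : V) (h : A4 G a b c d)
    (hno : ∀ u, u ∉ ({a,b,c,d} : Set V) → (G.Adj u a ↔ G.Adj u c)) :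
    twoSwitch G a b c d ≃g G := by
  classical
  obtain ⟨hab, hac, had, hbc, hbd, hcd, eab, ecd, nbc, nad⟩ := h
  have key : ∀ u, u ≠ a → u ≠ b → u ≠ c → u ≠ d → (G.Adj u a ↔ G.Adj u c) := by
    intro u h1 h2 h3 h4
    exact hno u (by simp [h1, h2, h3, h4])
  refine ⟨Equiv.swap a c, ?_⟩
  intro x y
  simp only [Equiv.coe_fn_mk, twoSwitch_adj]
  by_cases hxa : x = a <;> by_cases hxc : x = c <;> by_cases hya : y = a <;> by_cases hyc : y = c <;>
    subst_vars <;>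
    simp_all [Equiv.swap_apply_left, Equiv.swap_apply_right, Equiv.swap_apply_of_ne_of_ne] <;>
    first
      | exact fun hxy => hxy.ne
      | (by_cases hxb : x = b <;> by_cases hxd : x = d <;> by_cases hyb : y = b <;>
          by_cases hyd : y = d <;> subst_vars <;> simp_all [G.adj_comm] <;>
          first
            | exact fun _ hxy => hya hxy.symm
            | exact fun _ hxy => hyc hxy.symm
            | rw [← key x hxa hxb hxc hxd, G.adj_comm])

lemma twoSwitch_symm {V : Type*} (G : SimpleGraph V) (a b c d : V) :
    twoSwitch G b a d c = twoSwitch G a b c d := by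
  have e1 : s(b,a) = s(a,b) := Sym2.eq_swap
  have e2 : s(d,c) = s(c,d) := Sym2.eq_swap
  unfold twoSwitch
  rw [e1, e2, Set.pair_comm (s(a,d)) (s(b,c))]

theorem stmt_3 {V : Type*} (G : SimpleGraph V) (a b c d : V)
    (h : A4 G a b c d)
    (hiso : ¬ Nonempty (twoSwitch G a b c d ≃g G)) :
    ∃ u v : V, u ∉ ({a, b, c, d} : Set V) ∧ v ∉ ({a, b, c, d} : Set V) ∧
      Xor' (G.Adj u a) (G.Adj u c) ∧ Xor' (G.Adj v b) (G.Adj v d) := by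
  obtain ⟨hab, hac, had, hbc, hbd, hcd, eab, ecd, nbc, nad⟩ := h
  have h' : A4 G b a d c :=
    ⟨hab.symm, hbd, hbc, had, hac, hcd.symm, eab.symm, ecd.symm, nad, nbc⟩
  have hu : ∃ u, u ∉ ({a, b, c, d} : Set V) ∧ Xor' (G.Adj u a) (G.Adj u c) := by
    by_contra hcon
    push_neg at hcon
    exact hiso ⟨isoSwap G a b c d ⟨hab, hac, had, hbc, hbd, hcd, eab, ecd, nbc, nad⟩
      (fun u hu => by have := hcon u hu; unfold Xor' Xor at this; tauto)⟩
  have hv : ∃ v, v ∉ ({a, b, c, d} : Set V) ∧ Xor' (G.Adj v b) (G.Adj v d) := by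
    by_contra hcon
    push_neg at hcon
    refine hiso ⟨(twoSwitch_symm G a b c d) ▸ isoSwap G b a d c h' (fun v hv => ?_)⟩
    have hv' : v ∉ ({a, b, c, d} : Set V) := by
      simp only [Set.mem_insert_iff, Set.mem_singleton_iff] at hv ⊢; tauto
    have := hcon v hv'
    unfold Xor' Xor at this; tauto
  obtain ⟨u, hu1, hu2⟩ := hu
  obtain ⟨v, hv1, hv2⟩ := hv
  exact ⟨u, v, hu1, hv1, hu2, hv2⟩
end

section
/- The 5-vertex simple graphs that contain an alternating 4-cycle ⟨a,b:c,d⟩ together with a fifth vertex u such that ua, ud are edges and ub, uc are non-edges are, up to isomorphism, exactly: the path P5, the 4-pan (a 4-cycle with a pendant vertex attached), and the complete bipartite graph K_{2,3}. -/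
open SimpleGraph

/-- The 4-pan: a 4-cycle 0-1-2-3 with a pendant vertex 4 attached to 0. -/
def fourPan : SimpleGraph (Fin 5) :=
  SimpleGraph.fromEdgeSet {s(0,1), s(1,2), s(2,3), s(3,0), s(0,4)}

set_option maxHeartbeats 1600000 in
theorem stmt_11 {V : Type*} [Fintype V] (hV : Fintype.card V = 5)
    (G : SimpleGraph V) :
    (∃ a b c d u : V, A4 G a b c d ∧ u ∉ ({a, b, c, d} : Set V) ∧
        G.Adj u a ∧ G.Adj u d ∧ ¬ G.Adj u b ∧ ¬ G.Adj u c) ↔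
      (Nonempty (G ≃g SimpleGraph.pathGraph 5) ∨
       Nonempty (G ≃g fourPan) ∨
       Nonempty (G ≃g completeBipartiteGraph (Fin 2) (Fin 3))) := by
  constructor
  · rintro ⟨a, b, c, d, u, ⟨hab', hac', had', hbc', hbd', hcd', hab, hcd, hnbc, hnad⟩,
      hu, hua, hud, hnub, hnuc⟩
    simp only [Set.mem_insert_iff, Set.mem_singleton_iff, not_or] at hu
    obtain ⟨hua', hub', huc', hud'⟩ := hu
    have sab := hab.symm
    have scd := hcd.symm
    have sua := hua.symm
    have sud := hud.symm
    have sbc : ¬ G.Adj c b := fun h => hnbc h.symm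
    have sad : ¬ G.Adj d a := fun h => hnad h.symm
    have sub : ¬ G.Adj b u := fun h => hnub h.symm
    have suc : ¬ G.Adj c u := fun h => hnuc h.symm
    by_cases hac : G.Adj a c <;> by_cases hbd : G.Adj b d
    · -- K_{2,3}: parts {a,d} and {b,c,u}
      have sac := hac.symm
      have sbd := hbd.symm
      refine Or.inr (Or.inr ⟨?_⟩)
      have hinj : Function.Injective (Sum.elim ![a, d] ![b, c, u]) := by
        intro i j hij
        rcases i with i | i <;> rcases j with j | j <;>
          fin_cases i <;> fin_cases j <;> first | rfl | (exfalso; simp_all)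
      have hbij : Function.Bijective (Sum.elim ![a, d] ![b, c, u]) :=
        (Fintype.bijective_iff_injective_and_card _).mpr ⟨hinj, by simp [hV]⟩
      refine SimpleGraph.Iso.symm ⟨Equiv.ofBijective _ hbij, ?_⟩
      intro x y
      rcases x with x | x <;> rcases y with y | y <;>
        fin_cases x <;> fin_cases y <;>
          simp_all [Equiv.ofBijective]
    · -- fourPan: cycle a-c-d-u with pendant b at a
      have sac := hac.symm
      have sdb : ¬ G.Adj d b := fun h => hbd h.symm
      refine Or.inr (Or.inl ⟨?_⟩)
      have hinj : Function.Injective ![a, c, d, u, b] := by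
        intro i j hij; fin_cases i <;> fin_cases j <;> first | rfl | (exfalso; simp_all)
      have hbij : Function.Bijective ![a, c, d, u, b] :=
        (Fintype.bijective_iff_injective_and_card _).mpr ⟨hinj, by simp [hV]⟩
      refine SimpleGraph.Iso.symm ⟨Equiv.ofBijective _ hbij, ?_⟩
      intro x y
      fin_cases x <;> fin_cases y <;>
        simp_all [fourPan, Equiv.ofBijective]
    · -- fourPan: cycle d-b-a-u with pendant c at d
      have sbd := hbd.symm
      have sca : ¬ G.Adj c a := fun h => hac h.symm
      refine Or.inr (Or.inl ⟨?_⟩)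
      have hinj : Function.Injective ![d, b, a, u, c] := by
        intro i j hij; fin_cases i <;> fin_cases j <;> first | rfl | (exfalso; simp_all)
      have hbij : Function.Bijective ![d, b, a, u, c] :=
        (Fintype.bijective_iff_injective_and_card _).mpr ⟨hinj, by simp [hV]⟩
      refine SimpleGraph.Iso.symm ⟨Equiv.ofBijective _ hbij, ?_⟩
      intro x y
      fin_cases x <;> fin_cases y <;>
        simp_all [fourPan, Equiv.ofBijective]
    · -- path: b-a-u-d-c
      have sca : ¬ G.Adj c a := fun h => hac h.symm
      have sdb : ¬ G.Adj d b := fun h => hbd h.symm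
      refine Or.inl ⟨?_⟩
      have hinj : Function.Injective ![b, a, u, d, c] := by
        intro i j hij; fin_cases i <;> fin_cases j <;> first | rfl | (exfalso; simp_all)
      have hbij : Function.Bijective ![b, a, u, d, c] :=
        (Fintype.bijective_iff_injective_and_card _).mpr ⟨hinj, by simp [hV]⟩
      refine SimpleGraph.Iso.symm ⟨Equiv.ofBijective _ hbij, ?_⟩
      intro x y
      fin_cases x <;> fin_cases y <;>
        simp_all [pathGraph_adj, Equiv.ofBijective] <;> decide
  · rintro (h | h | h)
    · -- path 0-1-2-3-4 = b-a-u-d-c : a=1, b=0, c=4, d=3, u=2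
      obtain ⟨φ⟩ := h
      have hne : ∀ x y : Fin 5, x ≠ y → φ.symm x ≠ φ.symm y :=
        fun x y h e => h (φ.symm.injective e)
      have hadj : ∀ x y : Fin 5, G.Adj (φ.symm x) (φ.symm y) ↔ (pathGraph 5).Adj x y :=
        fun x y => φ.symm.map_rel_iff
      refine ⟨φ.symm 1, φ.symm 0, φ.symm 4, φ.symm 3, φ.symm 2,
        ⟨hne _ _ (by decide), hne _ _ (by decide), hne _ _ (by decide),
         hne _ _ (by decide), hne _ _ (by decide), hne _ _ (by decide),
         (hadj _ _).2 (by simp [pathGraph_adj] <;> decide), (hadj _ _).2 (by simp [pathGraph_adj] <;> decide),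
         fun h => absurd ((hadj _ _).1 h) (by simp [pathGraph_adj] <;> decide),
         fun h => absurd ((hadj _ _).1 h) (by simp [pathGraph_adj] <;> decide)⟩,
        ?_,
        (hadj _ _).2 (by simp [pathGraph_adj] <;> decide), (hadj _ _).2 (by simp [pathGraph_adj] <;> decide),
        fun h => absurd ((hadj _ _).1 h) (by simp [pathGraph_adj] <;> decide),
        fun h => absurd ((hadj _ _).1 h) (by simp [pathGraph_adj] <;> decide)⟩
      simp only [Set.mem_insert_iff, Set.mem_singleton_iff, not_or]
      exact ⟨hne _ _ (by decide), hne _ _ (by decide), hne _ _ (by decide),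
        hne _ _ (by decide)⟩
    · -- fourPan : a=0, b=4, c=1, d=2, u=3
      obtain ⟨φ⟩ := h
      have hne : ∀ x y : Fin 5, x ≠ y → φ.symm x ≠ φ.symm y :=
        fun x y h e => h (φ.symm.injective e)
      have hadj : ∀ x y : Fin 5, G.Adj (φ.symm x) (φ.symm y) ↔ fourPan.Adj x y :=
        fun x y => φ.symm.map_rel_iff
      refine ⟨φ.symm 0, φ.symm 4, φ.symm 1, φ.symm 2, φ.symm 3,
        ⟨hne _ _ (by decide), hne _ _ (by decide), hne _ _ (by decide),
         hne _ _ (by decide), hne _ _ (by decide), hne _ _ (by decide),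
         (hadj _ _).2 (by simp [fourPan]), (hadj _ _).2 (by simp [fourPan]),
         fun h => absurd ((hadj _ _).1 h) (by simp [fourPan]),
         fun h => absurd ((hadj _ _).1 h) (by simp [fourPan])⟩,
        ?_,
        (hadj _ _).2 (by simp [fourPan]), (hadj _ _).2 (by simp [fourPan]),
        fun h => absurd ((hadj _ _).1 h) (by simp [fourPan]),
        fun h => absurd ((hadj _ _).1 h) (by simp [fourPan])⟩
      simp only [Set.mem_insert_iff, Set.mem_singleton_iff, not_or]
      exact ⟨hne _ _ (by decide), hne _ _ (by decide), hne _ _ (by decide),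
        hne _ _ (by decide)⟩
    · -- K_{2,3} : a = inl 0, b = inr 0, c = inr 1, d = inl 1, u = inr 2
      obtain ⟨φ⟩ := h
      have hne : ∀ x y : Fin 2 ⊕ Fin 3, x ≠ y → φ.symm x ≠ φ.symm y :=
        fun x y h e => h (φ.symm.injective e)
      have hadj : ∀ x y : Fin 2 ⊕ Fin 3, G.Adj (φ.symm x) (φ.symm y) ↔
          (completeBipartiteGraph (Fin 2) (Fin 3)).Adj x y :=
        fun x y => φ.symm.map_rel_iff
      refine ⟨φ.symm (.inl 0), φ.symm (.inr 0), φ.symm (.inr 1), φ.symm (.inl 1),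
        φ.symm (.inr 2),
        ⟨hne _ _ (by decide), hne _ _ (by decide), hne _ _ (by decide),
         hne _ _ (by decide), hne _ _ (by decide), hne _ _ (by decide),
         (hadj _ _).2 (by simp), (hadj _ _).2 (by simp),
         fun h => absurd ((hadj _ _).1 h) (by simp),
         fun h => absurd ((hadj _ _).1 h) (by simp)⟩,
        ?_,
        (hadj _ _).2 (by simp), (hadj _ _).2 (by simp),
        fun h => absurd ((hadj _ _).1 h) (by simp),
        fun h => absurd ((hadj _ _).1 h) (by simp)⟩
      simp only [Set.mem_insert_iff, Set.mem_singleton_iff, not_or]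
      exact ⟨hne _ _ (by decide), hne _ _ (by decide), hne _ _ (by decide),
        hne _ _ (by decide)⟩
end

section
/- Two finite simple graphs G and H on the same finite vertex set have the same degree function (deg_G v = deg_H v for all v) if and only if there is a finite sequence of 2-switches transforming G into H. -/
open SimpleGraph

namespace FHM

variable {V : Type*}

/-- The one-step 2-switch relation. -/
def Step (X Y : SimpleGraph V) : Prop :=
  ∃ a b c d : V, A4 X a b c d ∧ Y = twoSwitch X a b c d

lemma twoSwitch_edgeSet {G : SimpleGraph V} {a b c d : V} (h : A4 G a b c d) :
    (twoSwitch G a b c d).edgeSet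
      = (G.edgeSet \ {s(a,b), s(c,d)}) ∪ {s(b,c), s(a,d)} := by
  obtain ⟨hab, hac, had, hbc, hbd, hcd, e1, e2, n1, n2⟩ := h
  rw [twoSwitch, edgeSet_fromEdgeSet]
  rw [sdiff_eq_left]
  rw [Set.disjoint_right]
  intro e hdiag hmem
  rcases hmem with ⟨he, -⟩ | he
  · exact (SimpleGraph.not_isDiag_of_mem_edgeSet G he) hdiag
  · rcases he with he | he <;> subst he <;> simp only [Set.mem_setOf_eq, Sym2.mem_diagSet, Sym2.mk_isDiag_iff] at hdiag
    · exact hbc hdiag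
    · exact had hdiag

lemma twoSwitch_adj {G : SimpleGraph V} {a b c d : V} (h : A4 G a b c d) {x y : V} :
    (twoSwitch G a b c d).Adj x y ↔
      s(x,y) ∈ (G.edgeSet \ {s(a,b), s(c,d)}) ∪ ({s(b,c), s(a,d)} : Set (Sym2 V)) := by
  rw [← SimpleGraph.mem_edgeSet, twoSwitch_edgeSet h]

lemma ncard_insert_diff {s : Set V} (hs : s.Finite) {x y : V} (hx : x ∈ s) (hy : y ∉ s) :
    (insert y (s \ {x})).ncard = s.ncard := by
  have h1 : y ∉ s \ {x} := fun h => hy h.1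
  rw [Set.ncard_insert_of_notMem h1 (hs.diff), Set.ncard_diff_singleton_of_mem hx]
  have : 0 < s.ncard := Set.ncard_pos hs |>.mpr ⟨x, hx⟩
  omega

lemma twoSwitch_degree [Fintype V] {G : SimpleGraph V} {a b c d : V} (h : A4 G a b c d) (v : V) :
    ((twoSwitch G a b c d).neighborSet v).ncard = (G.neighborSet v).ncard := by
  obtain ⟨hab, hac, had, hbc, hbd, hcd, e1, e2, n1, n2⟩ := h
  have hA4 : A4 G a b c d := ⟨hab, hac, had, hbc, hbd, hcd, e1, e2, n1, n2⟩
  by_cases hva : v = a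
  · subst hva
    have hset : (twoSwitch G v b c d).neighborSet v = insert d (G.neighborSet v \ {b}) := by
      ext w
      simp only [mem_neighborSet, twoSwitch_adj hA4, Set.mem_union, Set.mem_diff,
        Set.mem_insert_iff, Set.mem_singleton_iff, SimpleGraph.mem_edgeSet, Sym2.eq_iff]
      tauto
    rw [hset, ncard_insert_diff (Set.toFinite _) (by exact e1) (by exact n2)]
  by_cases hvb : v = b
  · subst hvb
    have hset : (twoSwitch G a v c d).neighborSet v = insert c (G.neighborSet v \ {a}) := by
      ext w
      simp only [mem_neighborSet, twoSwitch_adj hA4, Set.mem_union, Set.mem_diff,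
        Set.mem_insert_iff, Set.mem_singleton_iff, SimpleGraph.mem_edgeSet, Sym2.eq_iff]
      tauto
    rw [hset, ncard_insert_diff (Set.toFinite _) (by exact e1.symm) (by exact n1)]
  by_cases hvc : v = c
  · subst hvc
    have hset : (twoSwitch G a b v d).neighborSet v = insert b (G.neighborSet v \ {d}) := by
      ext w
      simp only [mem_neighborSet, twoSwitch_adj hA4, Set.mem_union, Set.mem_diff,
        Set.mem_insert_iff, Set.mem_singleton_iff, SimpleGraph.mem_edgeSet, Sym2.eq_iff]
      tauto
    rw [hset, ncard_insert_diff (Set.toFinite _) (by exact e2) (fun h => n1 h.symm)]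
  by_cases hvd : v = d
  · subst hvd
    have hset : (twoSwitch G a b c v).neighborSet v = insert a (G.neighborSet v \ {c}) := by
      ext w
      simp only [mem_neighborSet, twoSwitch_adj hA4, Set.mem_union, Set.mem_diff,
        Set.mem_insert_iff, Set.mem_singleton_iff, SimpleGraph.mem_edgeSet, Sym2.eq_iff]
      tauto
    rw [hset, ncard_insert_diff (Set.toFinite _) (by exact e2.symm) (fun h => n2 h.symm)]
  have hset : (twoSwitch G a b c d).neighborSet v = G.neighborSet v := by
    ext w
    simp only [mem_neighborSet, twoSwitch_adj hA4, Set.mem_union, Set.mem_diff,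
      Set.mem_insert_iff, Set.mem_singleton_iff, SimpleGraph.mem_edgeSet, Sym2.eq_iff]
    tauto
  rw [hset]

lemma step_symm {X Y : SimpleGraph V} (h : Step X Y) : Step Y X := by
  obtain ⟨a, b, c, d, hA4, rfl⟩ := h
  obtain ⟨hab, hac, had, hbc, hbd, hcd, e1, e2, n1, n2⟩ := hA4
  have hA4 : A4 X a b c d := ⟨hab, hac, had, hbc, hbd, hcd, e1, e2, n1, n2⟩
  have hE := twoSwitch_edgeSet hA4
  have hadj : ∀ x y : V, (twoSwitch X a b c d).Adj x y ↔
      s(x,y) ∈ (X.edgeSet \ {s(a,b), s(c,d)}) ∪ ({s(b,c), s(a,d)} : Set (Sym2 V)) :=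
    fun x y => twoSwitch_adj hA4
  refine ⟨b, c, d, a, ?_, ?_⟩
  · refine ⟨hbc, hbd, hab.symm, hcd, fun h => hac h.symm, had.symm, ?_, ?_, ?_, ?_⟩ <;>
      simp only [hadj, Set.mem_union, Set.mem_diff, Set.mem_insert_iff,
        Set.mem_singleton_iff, SimpleGraph.mem_edgeSet, Sym2.eq_iff] <;> tauto
  · have hX : twoSwitch (twoSwitch X a b c d) b c d a = X := by
      rw [← edgeSet_inj]
      have hab' : A4 (twoSwitch X a b c d) b c d a := by
        refine ⟨hbc, hbd, hab.symm, hcd, fun h => hac h.symm, had.symm, ?_, ?_, ?_, ?_⟩ <;>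
          simp only [hadj, Set.mem_union, Set.mem_diff, Set.mem_insert_iff,
            Set.mem_singleton_iff, SimpleGraph.mem_edgeSet, Sym2.eq_iff] <;> tauto
      rw [twoSwitch_edgeSet hab', hE]
      have h1 : s(d,a) = s(a,d) := Sym2.eq_swap
      have h2 : s(b,a) = s(a,b) := Sym2.eq_swap
      have hbcE : s(b,c) ∉ X.edgeSet := fun h => n1 ((SimpleGraph.mem_edgeSet X).mp h)
      have hadE : s(a,d) ∉ X.edgeSet := fun h => n2 ((SimpleGraph.mem_edgeSet X).mp h)
      have h3 : (X.edgeSet \ {s(a,b), s(c,d)}) \ {s(b,c), s(a,d)}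
          = X.edgeSet \ {s(a,b), s(c,d)} := by
        rw [sdiff_eq_left, Set.disjoint_left]
        rintro e he hmem
        rcases hmem with rfl | rfl
        · exact hbcE he.1
        · exact hadE he.1
      have h4 : ({s(a,b), s(c,d)} : Set (Sym2 V)) ⊆ X.edgeSet := by
        rintro e (rfl | rfl)
        · exact (SimpleGraph.mem_edgeSet X).mpr e1
        · exact (SimpleGraph.mem_edgeSet X).mpr e2
      rw [h1, h2, Set.pair_comm (s(c,d)) (s(a,b)), Set.union_diff_distrib, Set.diff_self,
        Set.union_empty, h3, Set.diff_union_of_subset h4]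
    exact hX.symm

/-- Edge type along an alternating walk: even positions carry `G\H` edges,
odd positions carry `H\G` edges. -/
def ET (G H : SimpleGraph V) (k : ℕ) (x y : V) : Prop :=
  if k % 2 = 0 then G.Adj x y ∧ ¬ H.Adj x y else H.Adj x y ∧ ¬ G.Adj x y

lemma ET_congr {G H : SimpleGraph V} {k k' : ℕ} (h : k % 2 = k' % 2) {x y : V} :
    ET G H k x y ↔ ET G H k' x y := by
  unfold ET; rw [h]

lemma ET_flip {G H : SimpleGraph V} {k : ℕ} {x y : V} :
    ET G H (k + 1) x y ↔ ET H G k x y := by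
  unfold ET
  rcases Nat.mod_two_eq_zero_or_one k with h | h <;>
    · have h' : (k + 1) % 2 = 1 - k % 2 := by omega
      rw [h', h]; simp

lemma ET_even {G H : SimpleGraph V} {k : ℕ} (hk : k % 2 = 0) {x y : V} :
    ET G H k x y ↔ G.Adj x y ∧ ¬ H.Adj x y := by unfold ET; rw [hk]; simp

lemma ET_odd {G H : SimpleGraph V} {k : ℕ} (hk : k % 2 = 1) {x y : V} :
    ET G H k x y ↔ H.Adj x y ∧ ¬ G.Adj x y := by unfold ET; rw [hk]; simp

/-- Equal degrees (as ncards of neighbor sets). -/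
def EqDeg (G H : SimpleGraph V) : Prop :=
  ∀ v : V, (G.neighborSet v).ncard = (H.neighborSet v).ncard

lemma EqDeg.symm {G H : SimpleGraph V} (h : EqDeg G H) : EqDeg H G := fun v => (h v).symm

/-- If degrees agree and `u` has a `G\H`-neighbor, it has an `H\G`-neighbor. -/
lemma exists_opp [Fintype V] {G H : SimpleGraph V} (hdeg : EqDeg G H) {u v : V}
    (h1 : G.Adj u v) (h2 : ¬ H.Adj u v) : ∃ w, H.Adj u w ∧ ¬ G.Adj u w := by
  have key : (G.neighborSet u \ H.neighborSet u).ncard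
      = (H.neighborSet u \ G.neighborSet u).ncard := by
    have e1 : (G.neighborSet u \ H.neighborSet u).ncard
        = (G.neighborSet u).ncard - (G.neighborSet u ∩ H.neighborSet u).ncard := by
      rw [← Set.diff_self_inter, Set.ncard_diff Set.inter_subset_left (Set.toFinite _)]
    have e2 : (H.neighborSet u \ G.neighborSet u).ncard
        = (H.neighborSet u).ncard - (H.neighborSet u ∩ G.neighborSet u).ncard := by
      rw [← Set.diff_self_inter, Set.ncard_diff Set.inter_subset_left (Set.toFinite _)]
    rw [e1, e2, Set.inter_comm, hdeg u]
  have hne : (G.neighborSet u \ H.neighborSet u).Nonempty := ⟨v, h1, h2⟩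
  have hpos : 0 < (G.neighborSet u \ H.neighborSet u).ncard :=
    (Set.ncard_pos (Set.toFinite _)).mpr hne
  have : (H.neighborSet u \ G.neighborSet u).Nonempty :=
    Set.nonempty_of_ncard_ne_zero (by omega)
  obtain ⟨w, hw1, hw2⟩ := this
  exact ⟨w, hw1, hw2⟩

open Classical in
/-- The next vertex along an alternating walk. -/
noncomputable def nxt (G H : SimpleGraph V) (k : ℕ) (v : V) : V :=
  if h : ∃ w, ET G H k v w then h.choose else v

/-- The alternating walk, as a sequence of (current, next) pairs; `wk G H a b n`
is `(w n, w (n+1))` and the connecting edge has type `ET G H n`. -/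
noncomputable def wk (G H : SimpleGraph V) (a b : V) : ℕ → V × V
  | 0 => (a, b)
  | n + 1 => ((wk G H a b n).2, nxt G H (n + 1) (wk G H a b n).2)

lemma wk_snd (G H : SimpleGraph V) (a b : V) (n : ℕ) :
    (wk G H a b n).2 = (wk G H a b (n + 1)).1 := by
  cases n <;> rfl

lemma wk_inv [Fintype V] {G H : SimpleGraph V} (hdeg : EqDeg G H) {a b : V}
    (hab : G.Adj a b) (hab' : ¬ H.Adj a b) (n : ℕ) :
    ET G H n (wk G H a b n).1 (wk G H a b n).2 := by
  induction n with
  | zero => rw [ET_even (by norm_num)]; exact ⟨hab, hab'⟩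
  | succ n ih =>
    show ET G H (n+1) (wk G H a b n).2 (nxt G H (n+1) (wk G H a b n).2)
    have hex : ∃ w, ET G H (n+1) (wk G H a b n).2 w := by
      rcases Nat.mod_two_eq_zero_or_one n with hpar | hpar
      · rw [ET_even hpar] at ih
        obtain ⟨w, hw1, hw2⟩ := exists_opp hdeg ih.1.symm (fun h => ih.2 h.symm)
        exact ⟨w, by rw [ET_odd (by omega)]; exact ⟨hw1, hw2⟩⟩
      · rw [ET_odd hpar] at ih
        obtain ⟨w, hw1, hw2⟩ := exists_opp (EqDeg.symm hdeg) ih.1.symm (fun h => ih.2 h.symm)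
        exact ⟨w, by rw [ET_even (by omega)]; exact ⟨hw1, hw2⟩⟩
    rw [nxt, dif_pos hex]
    exact hex.choose_spec

/-- A closed alternating circuit of length `2*m`. -/
def AltCirc (G H : SimpleGraph V) (m : ℕ) (c : ℕ → V) : Prop :=
  (∀ k, c (k + 2*m) = c k) ∧ ∀ k, ET G H k (c k) (c (k+1))

lemma circuit_of_repeat {G H : SimpleGraph V} {w : ℕ → V}
    (hedge : ∀ n, ET G H n (w n) (w (n+1))) {i j : ℕ} (hij : i < j)
    (hrep : w (2*i) = w (2*j)) : ∃ m c, 2 ≤ m ∧ AltCirc G H m c := by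
  have hm1 : 1 ≤ j - i := by omega
  by_cases hm2 : j - i = 1
  · exfalso
    have h1 := hedge (2*i)
    have h2 := hedge (2*i+1)
    rw [ET_even (by omega)] at h1
    rw [ET_odd (by omega)] at h2
    have hj : 2*j = 2*i+1+1 := by omega
    rw [hj] at hrep
    rw [← hrep] at h2
    exact h1.2 h2.1.symm
  · refine ⟨j - i, fun k => w (2*i + k % (2*(j-i))), by omega, fun k => ?_, fun k => ?_⟩
    · beta_reduce
      rw [Nat.add_mod_right]
    · beta_reduce
      have hpos : 0 < 2*(j-i) := by omega
      have hr : k % (2*(j-i)) < 2*(j-i) := Nat.mod_lt _ hpos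
      have hpar : (2*i + k % (2*(j-i))) % 2 = k % 2 := by
        rw [Nat.mul_add_mod 2 i _, Nat.mod_mod_of_dvd k ⟨j-i, rfl⟩]
      by_cases hlast : k % (2*(j-i)) + 1 = 2*(j-i)
      · have hmod : (k+1) % (2*(j-i)) = 0 := by
          have e : k + 1 = 2*(j-i)*(k/(2*(j-i)) + 1) := by
            have := Nat.div_add_mod k (2*(j-i)); nlinarith
          rw [e, Nat.mul_mod_right]
        rw [hmod]
        have hrw : w (2*i + 0) = w (2*i + k % (2*(j-i)) + 1) := by
          have e1 : 2*i + k % (2*(j-i)) + 1 = 2*j := by omega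
          rw [e1, Nat.add_zero, hrep]
        rw [hrw]
        exact (ET_congr hpar).mp (hedge (2*i + k % (2*(j-i))))
      · have hmod : (k+1) % (2*(j-i)) = k % (2*(j-i)) + 1 := by
          have e : k + 1 = (k % (2*(j-i)) + 1) + 2*(j-i)*(k/(2*(j-i))) := by
            have := Nat.div_add_mod k (2*(j-i)); omega
          rw [e, Nat.add_mul_mod_self_left, Nat.mod_eq_of_lt (by omega)]
        rw [hmod]
        exact (ET_congr hpar).mp (hedge (2*i + k % (2*(j-i))))

lemma altCirc_exists [Fintype V] {G H : SimpleGraph V} (hdeg : EqDeg G H) {a b : V}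
    (h1 : G.Adj a b) (h2 : ¬ H.Adj a b) : ∃ m c, 2 ≤ m ∧ AltCirc G H m c := by
  set w : ℕ → V := fun n => (wk G H a b n).1 with hw
  have hedge : ∀ n, ET G H n (w n) (w (n+1)) := by
    intro n
    have h := wk_inv hdeg h1 h2 n
    rwa [wk_snd] at h
  obtain ⟨i, j, hij, hww⟩ := Finite.exists_ne_map_eq_of_infinite (fun n => w (2*n))
  rcases Nat.lt_or_ge i j with h | h
  · exact circuit_of_repeat hedge h hww
  · have h' : j < i := by omega
    exact circuit_of_repeat hedge h' hww.symm

lemma AltCirc.rot {G H : SimpleGraph V} {m : ℕ} {c : ℕ → V} (h : AltCirc G H m c) :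
    AltCirc H G m (fun k => c (k+1)) := by
  refine ⟨fun k => ?_, fun k => ?_⟩
  · beta_reduce
    rw [show k + 2*m + 1 = k + 1 + 2*m from by omega, h.1 (k+1)]
  · exact ET_flip.mp (h.2 (k+1))

/-- The symmetric difference of edge sets. -/
def Dm (G H : SimpleGraph V) : Set (Sym2 V) :=
  (G.edgeSet \ H.edgeSet) ∪ (H.edgeSet \ G.edgeSet)

lemma Dm_comm (G H : SimpleGraph V) : Dm G H = Dm H G := Set.union_comm _ _

lemma ncard_lt_of_sub [Fintype V] {s s' : Set (Sym2 V)} {f p q : Sym2 V}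
    (hsub : s' ⊆ (s ∪ {f}) \ {p, q}) (hp : p ∈ s) (hq : q ∈ s) (hpq : p ≠ q) :
    s'.ncard < s.ncard := by
  have h1 : s'.ncard ≤ ((s ∪ {f}) \ {p,q}).ncard := Set.ncard_le_ncard hsub (Set.toFinite _)
  have h2 : ({p,q} : Set (Sym2 V)) ⊆ s ∪ {f} := by
    rintro e (rfl | rfl)
    · exact Or.inl hp
    · exact Or.inl hq
  have h3 : ((s ∪ {f}) \ {p,q}).ncard = (s ∪ {f}).ncard - 2 := by
    rw [Set.ncard_diff h2 (Set.toFinite _), Set.ncard_pair hpq]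
  have h4 : (s ∪ {f}).ncard ≤ s.ncard + 1 := by
    calc (s ∪ {f}).ncard ≤ s.ncard + ({f} : Set (Sym2 V)).ncard :=
          Set.ncard_union_le s {f}
      _ = s.ncard + 1 := by rw [Set.ncard_singleton]
  have h5 : 0 < s.ncard := (Set.ncard_pos (Set.toFinite _)).mpr ⟨p, hp⟩
  omega

lemma key_step [Fintype V] {X Y : SimpleGraph V} {m : ℕ} {c : ℕ → V}
    (hc : AltCirc X Y m c) (hm : 2 ≤ m)
    (hmin : ∀ m' c', 2 ≤ m' → AltCirc X Y m' c' → m ≤ m')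
    (h03 : c 0 ≠ c 3) :
    (∃ X', Step X X' ∧ (Dm X' Y).ncard < (Dm X Y).ncard) ∨
    (∃ Y', Step Y Y' ∧ (Dm X Y').ncard < (Dm X Y).ncard) := by
  have e0 := (ET_even (by norm_num)).mp (hc.2 0)
  have e1 := (ET_odd (by norm_num)).mp (hc.2 1)
  have e2 := (ET_even (by norm_num)).mp (hc.2 2)
  -- distinctness
  have h01 : c 0 ≠ c 1 := e0.1.ne
  have h12 : c 1 ≠ c 2 := e1.1.ne
  have h23 : c 2 ≠ c 3 := e2.1.ne
  have h02 : c 0 ≠ c 2 := by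
    intro h
    exact e1.2 (h ▸ e0.1).symm
  have h13 : c 1 ≠ c 3 := by
    intro h
    exact e2.2 (h ▸ e1.1).symm
  by_cases hXad : X.Adj (c 0) (c 3)
  · by_cases hYad : Y.Adj (c 0) (c 3)
    · -- switch on Y
      right
      have hA4 : A4 Y (c 0) (c 3) (c 2) (c 1) :=
        ⟨h03, h02, h01, fun h => h23 h.symm, fun h => h13 h.symm, fun h => h12 h.symm,
          hYad, e1.1.symm, fun h => e2.2 h.symm, e0.2⟩
      refine ⟨twoSwitch Y (c 0) (c 3) (c 2) (c 1), ⟨_, _, _, _, hA4, rfl⟩, ?_⟩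
      have hEY' := twoSwitch_edgeSet hA4
      apply ncard_lt_of_sub (f := s(c 0, c 3)) (p := s(c 0, c 1)) (q := s(c 1, c 2))
        ?_ (Or.inl ⟨(SimpleGraph.mem_edgeSet X).mpr e0.1, fun h => e0.2 ((SimpleGraph.mem_edgeSet Y).mp h)⟩)
        (Or.inr ⟨(SimpleGraph.mem_edgeSet Y).mpr e1.1, fun h => e1.2 ((SimpleGraph.mem_edgeSet X).mp h)⟩)
        (by simp only [ne_eq, Sym2.eq_iff]; tauto)
      intro e he
      have hs1 : s(c 2, c 1) = s(c 1, c 2) := Sym2.eq_swap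
      have hs2 : s(c 3, c 2) = s(c 2, c 3) := Sym2.eq_swap
      constructor
      · -- e ∈ Dm X Y ∪ {s(c0,c3)}
        rcases he with ⟨heX, heY'⟩ | ⟨heY', heX⟩
        · rw [hEY'] at heY'
          by_cases heY : e ∈ Y.edgeSet
          · have hrem : e ∈ ({s(c 0, c 3), s(c 2, c 1)} : Set (Sym2 V)) := by
              by_contra hrem
              exact heY' (Or.inl ⟨heY, hrem⟩)
            rcases hrem with rfl | rfl
            · exact Or.inr rfl
            · exact absurd ((SimpleGraph.mem_edgeSet X).mp heX) (fun h => e1.2 h.symm)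
          · exact Or.inl (Or.inl ⟨heX, heY⟩)
        · rw [hEY'] at heY'
          rcases heY' with ⟨heY, -⟩ | (rfl | rfl)
          · exact Or.inl (Or.inr ⟨heY, heX⟩)
          · exact absurd ((SimpleGraph.mem_edgeSet X).mpr e2.1.symm) heX
          · exact absurd ((SimpleGraph.mem_edgeSet X).mpr e0.1) heX
      · -- e ∉ {s(c0,c1), s(c1,c2)}
        rintro (rfl | rfl)
        · rcases he with ⟨-, heY'⟩ | ⟨-, heX⟩
          · exact heY' (by rw [hEY']; exact Or.inr (Or.inr rfl))
          · exact heX ((SimpleGraph.mem_edgeSet X).mpr e0.1)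
        · rcases he with ⟨heX, -⟩ | ⟨heY', -⟩
          · exact e1.2 ((SimpleGraph.mem_edgeSet X).mp heX)
          · rw [hEY'] at heY'
            rcases heY' with ⟨-, hnot⟩ | (habs | habs)
            · exact hnot (Or.inr hs1.symm)
            · simp only [Set.mem_singleton_iff, Sym2.eq_iff] at habs; tauto
            · simp only [Set.mem_singleton_iff, Sym2.eq_iff] at habs; tauto
    · -- c0c3 ∈ X \ Y : build a shorter circuit, contradiction with minimality
      exfalso
      rcases Nat.lt_or_ge m 3 with hm3 | hm3
      · -- m = 2 : direct contradiction
        have hm2' : m = 2 := by omega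
        have e3 := (ET_odd (by norm_num)).mp (hc.2 3)
        have h40 : c 4 = c 0 := by
          have h := hc.1 0
          rw [hm2'] at h
          simpa using h
        rw [h40] at e3
        exact e3.2 hXad.symm
      · -- m ≥ 3 : circuit of length 2*(m-1)
        set L : ℕ := 2*(m-1) with hL
        have hL4 : 4 ≤ L := by omega
        set c' : ℕ → V := fun k => if k % L = 0 then c 0 else c (k % L + 2) with hc'
        have hcirc : AltCirc X Y (m-1) c' := by
          refine ⟨fun k => ?_, fun k => ?_⟩
          · simp only [hc', ← hL, Nat.add_mod_right]
          · have hLpos : 0 < L := by omega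
            have hr : k % L < L := Nat.mod_lt _ hLpos
            have hpar : k % 2 = k % L % 2 := (Nat.mod_mod_of_dvd k ⟨m-1, hL⟩).symm
            simp only [hc', ← hL]
            by_cases hr0 : k % L = 0
            · have hk1 : (k+1) % L = 1 := by
                have e : k + 1 = 1 + L*(k/L) := by have := Nat.div_add_mod k L; omega
                rw [e, Nat.add_mul_mod_self_left, Nat.mod_eq_of_lt (by omega)]
              rw [hr0, hk1]
              simp only [if_pos rfl, if_neg (by norm_num : (1:ℕ) ≠ 0)]
              rw [ET_even (by omega)]
              exact ⟨hXad, hYad⟩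
            · by_cases hlast : k % L + 1 = L
              · have hk1 : (k+1) % L = 0 := by
                  have e : k + 1 = L*(k/L + 1) := by have := Nat.div_add_mod k L; nlinarith
                  rw [e, Nat.mul_mod_right]
                rw [hk1]
                simp only [if_neg hr0, if_pos rfl]
                have hidx : k % L + 2 = 2*m - 1 := by omega
                rw [hidx]
                have hE := hc.2 (2*m - 1)
                have h2m : 2*m - 1 + 1 = 0 + 2*m := by omega
                rw [h2m, hc.1 0] at hE
                refine (ET_congr ?_).mp hE
                omega
              · have hk1 : (k+1) % L = k % L + 1 := by
                  have e : k + 1 = (k % L + 1) + L*(k/L) := by have := Nat.div_add_mod k L; omega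
                  rw [e, Nat.add_mul_mod_self_left, Nat.mod_eq_of_lt (by omega)]
                rw [hk1]
                simp only [if_neg hr0, if_neg (by omega : ¬(k % L + 1 = 0))]
                have hE := hc.2 (k % L + 2)
                have hidx : k % L + 1 + 2 = k % L + 2 + 1 := by omega
                rw [hidx]
                refine (ET_congr ?_).mp hE
                omega
        exact absurd (hmin (m-1) c' (by omega) hcirc) (by omega)
  · -- switch on X
    left
    have hA4 : A4 X (c 0) (c 1) (c 2) (c 3) :=
      ⟨h01, h02, h03, h12, h13, h23, e0.1, e2.1, e1.2, hXad⟩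
    refine ⟨twoSwitch X (c 0) (c 1) (c 2) (c 3), ⟨_, _, _, _, hA4, rfl⟩, ?_⟩
    have hEX' := twoSwitch_edgeSet hA4
    apply ncard_lt_of_sub (f := s(c 0, c 3)) (p := s(c 0, c 1)) (q := s(c 2, c 3))
      ?_ (Or.inl ⟨(SimpleGraph.mem_edgeSet X).mpr e0.1, fun h => e0.2 ((SimpleGraph.mem_edgeSet Y).mp h)⟩)
      (Or.inl ⟨(SimpleGraph.mem_edgeSet X).mpr e2.1, fun h => e2.2 ((SimpleGraph.mem_edgeSet Y).mp h)⟩)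
      (by simp only [ne_eq, Sym2.eq_iff]; tauto)
    intro e he
    constructor
    · rcases he with ⟨heX', heY⟩ | ⟨heY, heX'⟩
      · rw [hEX'] at heX'
        rcases heX' with ⟨heX, -⟩ | (rfl | rfl)
        · exact Or.inl (Or.inl ⟨heX, heY⟩)
        · exact absurd ((SimpleGraph.mem_edgeSet Y).mpr e1.1) heY
        · exact Or.inr rfl
      · rw [hEX'] at heX'
        by_cases heX : e ∈ X.edgeSet
        · have hrem : e ∈ ({s(c 0, c 1), s(c 2, c 3)} : Set (Sym2 V)) := by
            by_contra hrem
            exact heX' (Or.inl ⟨heX, hrem⟩)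
          rcases hrem with rfl | rfl
          · exact absurd ((SimpleGraph.mem_edgeSet Y).mp heY) e0.2
          · exact absurd ((SimpleGraph.mem_edgeSet Y).mp heY) e2.2
        · exact Or.inl (Or.inr ⟨heY, heX⟩)
    · rintro (rfl | rfl)
      · rcases he with ⟨heX', -⟩ | ⟨heY, -⟩
        · rw [hEX'] at heX'
          rcases heX' with ⟨-, hnot⟩ | (habs | habs)
          · exact hnot (Or.inl rfl)
          · simp only [Set.mem_singleton_iff, Sym2.eq_iff] at habs; tauto
          · simp only [Set.mem_singleton_iff, Sym2.eq_iff] at habs; tauto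
        · exact e0.2 ((SimpleGraph.mem_edgeSet Y).mp heY)
      · rcases he with ⟨heX', -⟩ | ⟨heY, -⟩
        · rw [hEX'] at heX'
          rcases heX' with ⟨-, hnot⟩ | (habs | habs)
          · exact hnot (Or.inr rfl)
          · simp only [Set.mem_singleton_iff, Sym2.eq_iff] at habs; tauto
          · simp only [Set.mem_singleton_iff, Sym2.eq_iff] at habs; tauto
        · exact e2.2 ((SimpleGraph.mem_edgeSet Y).mp heY)

lemma from_circ [Fintype V] {X Y : SimpleGraph V} {m : ℕ} {cc : ℕ → V}
    (hc : AltCirc X Y m cc) (hm2 : 2 ≤ m)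
    (hminXY : ∀ m' c', 2 ≤ m' → AltCirc X Y m' c' → m ≤ m')
    (hminYX : ∀ m' c', 2 ≤ m' → AltCirc Y X m' c' → m ≤ m') :
    (∃ X', Step X X' ∧ (Dm X' Y).ncard < (Dm X Y).ncard) ∨
    (∃ Y', Step Y Y' ∧ (Dm X Y').ncard < (Dm X Y).ncard) := by
  by_cases h03 : cc 0 = cc 3
  · by_cases h14 : cc 1 = cc 4
    · exfalso
      have e0 := (ET_even (by norm_num)).mp (hc.2 0)
      have e3 := (ET_odd (by norm_num)).mp (hc.2 3)
      rw [← h03, show (3:ℕ)+1 = 4 from rfl, ← h14] at e3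
      exact e3.2 e0.1
    · have hrot : AltCirc Y X m (fun k => cc (k+1)) := hc.rot
      have h03' : (fun k => cc (k+1)) 0 ≠ (fun k => cc (k+1)) 3 := by
        beta_reduce; exact h14
      rcases key_step hrot hm2 hminYX h03' with ⟨Y', hstep, hlt⟩ | ⟨X', hstep, hlt⟩
      · right
        refine ⟨Y', hstep, ?_⟩
        rw [Dm_comm X Y', Dm_comm X Y]
        exact hlt
      · left
        refine ⟨X', hstep, ?_⟩
        rw [Dm_comm X' Y, Dm_comm X Y]
        exact hlt
  · exact key_step hc hm2 hminXY h03

lemma step_deg [Fintype V] {X X' : SimpleGraph V} (h : Step X X') (v : V) :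
    (X'.neighborSet v).ncard = (X.neighborSet v).ncard := by
  obtain ⟨a, b, c, d, hA4, rfl⟩ := h
  exact twoSwitch_degree hA4 v

lemma main_forward [Fintype V] :
    ∀ (n : ℕ) (G H : SimpleGraph V), EqDeg G H → (Dm G H).ncard = n →
      Relation.ReflTransGen Step G H := by
  intro n
  induction n using Nat.strong_induction_on with
  | _ n ih =>
    intro G H hdeg hcard
    by_cases hGH : G = H
    · subst hGH; exact Relation.ReflTransGen.refl
    · have hne : ∃ u v, G.Adj u v ∧ ¬ H.Adj u v := by
        by_contra hno
        push_neg at hno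
        apply hGH
        ext u v
        constructor
        · exact hno u v
        · intro hH
          by_contra hG
          obtain ⟨w, hw1, hw2⟩ := exists_opp hdeg.symm hH hG
          exact hw2 (hno u w hw1)
      obtain ⟨a, b, hab1, hab2⟩ := hne
      obtain ⟨m0, c0, hm0, hc0⟩ := altCirc_exists hdeg hab1 hab2
      classical
      have hP : ∃ m, 2 ≤ m ∧ ∃ c : ℕ → V, AltCirc G H m c ∨ AltCirc H G m c :=
        ⟨m0, hm0, c0, Or.inl hc0⟩
      obtain ⟨hm2, cc, hcc⟩ := Nat.find_spec hP
      have hminGH : ∀ m' c', 2 ≤ m' → AltCirc G H m' c' → Nat.find hP ≤ m' :=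
        fun m' c' h1 h2 => Nat.find_le ⟨h1, c', Or.inl h2⟩
      have hminHG : ∀ m' c', 2 ≤ m' → AltCirc H G m' c' → Nat.find hP ≤ m' :=
        fun m' c' h1 h2 => Nat.find_le ⟨h1, c', Or.inr h2⟩
      have hres : (∃ G', Step G G' ∧ (Dm G' H).ncard < (Dm G H).ncard) ∨
          (∃ H', Step H H' ∧ (Dm G H').ncard < (Dm G H).ncard) := by
        rcases hcc with hcc | hcc
        · exact from_circ hcc hm2 hminGH hminHG
        · rcases from_circ hcc hm2 hminHG hminGH with ⟨H', hstep, hlt⟩ | ⟨G', hstep, hlt⟩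
          · right
            refine ⟨H', hstep, ?_⟩
            rw [Dm_comm G H', Dm_comm G H]
            exact hlt
          · left
            refine ⟨G', hstep, ?_⟩
            rw [Dm_comm G' H, Dm_comm G H]
            exact hlt
      rcases hres with ⟨G', hstep, hlt⟩ | ⟨H', hstep, hlt⟩
      · have hdeg' : EqDeg G' H := fun v => (step_deg hstep v).trans (hdeg v)
        have hrec := ih (Dm G' H).ncard (by omega) G' H hdeg' rfl
        exact Relation.ReflTransGen.head hstep hrec
      · have hdeg' : EqDeg G H' := fun v => (hdeg v).trans (step_deg hstep v).symm
        have hrec := ih (Dm G H').ncard (by omega) G H' hdeg' rfl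
        exact hrec.tail (step_symm hstep)

end FHM

theorem stmt_16 {V : Type*} [Fintype V] (G H : SimpleGraph V) :
    (∀ v : V, (G.neighborSet v).ncard = (H.neighborSet v).ncard) ↔
      Relation.ReflTransGen
        (fun X Y : SimpleGraph V =>
          ∃ a b c d : V, A4 X a b c d ∧ Y = twoSwitch X a b c d) G H := by
  constructor
  · intro hdeg
    exact FHM.main_forward (FHM.Dm G H).ncard G H hdeg rfl
  · intro h
    induction h with
    | refl => intro v; rfl
    | tail h1 h2 ih =>
      intro v
      exact (ih v).trans (FHM.step_deg h2 v).symm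
end

section
/- If a finite simple graph G contains no alternating 4-cycle (i.e., G is a threshold graph), then G is a unigraph: every graph with the same degree sequence as G is isomorphic to G. -/
open SimpleGraph

/-- The degree multiset (degree sequence) of a finite graph. -/
noncomputable def degMS {V : Type*} [Fintype V] (G : SimpleGraph V) : Multiset ℕ :=
  Finset.univ.val.map fun v => (G.neighborSet v).ncard

/-- A unigraph: every finite graph with the same degree sequence is isomorphic to it. -/
def IsUnigraph {V : Type} [Fintype V] (G : SimpleGraph V) : Prop :=
  ∀ (W : Type) (_ : Fintype W) (H : SimpleGraph W), degMS G = degMS H → Nonempty (G ≃g H)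

open Finset

set_option linter.unusedSectionVars false

section Aux
variable {V : Type} [Fintype V]

lemma ncard_nb (G : SimpleGraph V) [DecidableRel G.Adj] (v : V) :
    (G.neighborSet v).ncard = G.degree v := by
  rw [Set.ncard_eq_toFinset_card', SimpleGraph.degree]
  congr 1

lemma degMS_eq (G : SimpleGraph V) [DecidableRel G.Adj] :
    degMS G = Finset.univ.val.map fun v => G.degree v := by
  unfold degMS
  exact Multiset.map_congr rfl fun x _ => ncard_nb G x

lemma degMS_card (G : SimpleGraph V) :
    Multiset.card (degMS G) = Fintype.card V := by
  simp only [degMS, Multiset.card_map]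
  rfl

/-- In an A4-free graph, any vertex of maximum degree is adjacent to every
other non-isolated vertex; hence there is an isolated or dominating vertex. -/
lemma exists_iso_or_dom (G : SimpleGraph V) [DecidableRel G.Adj] [Nonempty V]
    (h : ∀ a b c d : V, ¬ A4 G a b c d) :
    (∃ v, ∀ w, ¬ G.Adj v w) ∨ (∃ v, ∀ w, w ≠ v → G.Adj v w) := by
  classical
  by_cases hiso : ∃ v, ∀ w, ¬ G.Adj v w
  · exact Or.inl hiso
  push_neg at hiso
  right
  obtain ⟨v, -, hmax⟩ := Finset.exists_max_image Finset.univ (fun x => G.degree x) Finset.univ_nonempty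
  refine ⟨v, fun w hw => ?_⟩
  by_contra hnadj
  have hvw : ¬ G.Adj w v := fun hh => hnadj hh.symm
  have hdvw : G.degree w ≤ G.degree v := hmax w (mem_univ w)
  -- counting helper
  have key : ∀ x y : V, G.degree x ≤ G.degree y →
      (G.neighborFinset x \ G.neighborFinset y).card ≤
      (G.neighborFinset y \ G.neighborFinset x).card := by
    intro x y hxy
    have h1 := Finset.card_sdiff_add_card_inter (G.neighborFinset x) (G.neighborFinset y)
    have h2 := Finset.card_sdiff_add_card_inter (G.neighborFinset y) (G.neighborFinset x)
    rw [Finset.inter_comm] at h2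
    simp only [card_neighborFinset_eq_degree] at h1 h2
    omega
  by_cases hcase : (G.neighborFinset w \ G.neighborFinset v).Nonempty
  · obtain ⟨d, hd⟩ := hcase
    rw [Finset.mem_sdiff, mem_neighborFinset] at hd
    obtain ⟨hdw, hdv⟩ := hd
    rw [mem_neighborFinset] at hdv
    have hdmem : d ∈ G.neighborFinset w \ G.neighborFinset v := by
      rw [Finset.mem_sdiff, mem_neighborFinset, mem_neighborFinset]
      exact ⟨hdw, hdv⟩
    have hb : (G.neighborFinset v \ G.neighborFinset w).Nonempty := by
      rw [← Finset.card_pos]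
      have h1 := key w v hdvw
      have h2 : 0 < (G.neighborFinset w \ G.neighborFinset v).card :=
        Finset.card_pos.mpr ⟨d, hdmem⟩
      omega
    obtain ⟨b, hb⟩ := hb
    rw [Finset.mem_sdiff, mem_neighborFinset, mem_neighborFinset] at hb
    obtain ⟨hbv, hbw⟩ := hb
    refine h v b w d ⟨hbv.ne, hw.symm, ?_, ?_, ?_, hdw.ne, hbv, hdw, fun q => hbw q.symm, hdv⟩
    · exact fun e => hvw (e ▸ hdw)
    · exact fun e => hnadj (e ▸ hbv)
    · exact fun e => hbw (by rw [e]; exact hdw)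
  · -- N(w) ⊆ N(v)
    rw [Finset.not_nonempty_iff_eq_empty, Finset.sdiff_eq_empty_iff_subset] at hcase
    obtain ⟨x, hx⟩ := hiso w
    have hxw : G.Adj w x := hx
    have hxv : G.Adj v x := by
      have := hcase (by rwa [mem_neighborFinset]); rwa [mem_neighborFinset] at this
    have hsub : {v, w} ⊆ G.neighborFinset x \ G.neighborFinset v := by
      intro z hz
      rw [Finset.mem_insert, Finset.mem_singleton] at hz
      rcases hz with rfl | rfl
      · rw [Finset.mem_sdiff, mem_neighborFinset, mem_neighborFinset]
        exact ⟨hxv.symm, G.irrefl⟩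
      · rw [Finset.mem_sdiff, mem_neighborFinset, mem_neighborFinset]
        exact ⟨hxw.symm, hnadj⟩
    have h2 : 1 < (G.neighborFinset x \ G.neighborFinset v).card := by
      calc 1 < ({v, w} : Finset V).card := by
              rw [Finset.card_insert_of_notMem (by simpa using hw.symm),
                Finset.card_singleton]
              omega
        _ ≤ _ := Finset.card_le_card hsub
    have h3 : 1 < (G.neighborFinset v \ G.neighborFinset x).card :=
      lt_of_lt_of_le h2 (key x v (hmax x (mem_univ x)))
    obtain ⟨e, he, hex⟩ := Finset.exists_mem_ne h3 x
    rw [Finset.mem_sdiff, mem_neighborFinset, mem_neighborFinset] at he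
    obtain ⟨hev, hnex⟩ := he
    refine h x w v e ⟨hxw.symm.ne, hxv.ne', hex.symm, hw, ?_, hev.ne, hxw.symm, hev, hvw, hnex⟩
    · exact fun q => hnadj (q ▸ hev)

end Aux

section Aux2
variable {V : Type} [Fintype V] [DecidableEq V]

lemma nbset_comap (G : SimpleGraph V) (v : V) (x : {y : V // y ≠ v}) :
    Subtype.val '' ((G.comap (Subtype.val : {y : V // y ≠ v} → V)).neighborSet x)
      = G.neighborSet x.val \ {v} := by
  ext y
  constructor
  · rintro ⟨⟨z, hz⟩, hadj, rfl⟩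
    exact ⟨hadj, hz⟩
  · rintro ⟨hadj, hy⟩
    exact ⟨⟨y, hy⟩, hadj, rfl⟩

lemma ncard_comap (G : SimpleGraph V) [DecidableRel G.Adj] (v : V) (x : {y : V // y ≠ v}) :
    ((G.comap (Subtype.val : {y : V // y ≠ v} → V)).neighborSet x).ncard
      = G.degree x.val - (if G.Adj x.val v then 1 else 0) := by
  rw [← Set.ncard_image_of_injective _ Subtype.coe_injective, nbset_comap]
  by_cases hadj : G.Adj x.val v
  · rw [Set.ncard_diff_singleton_of_mem (show v ∈ G.neighborSet x.val from hadj), ncard_nb, if_pos hadj]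
  · rw [Set.diff_singleton_eq_self (show v ∉ G.neighborSet x.val from hadj), ncard_nb, if_neg hadj]
    omega

lemma degMS_comap (G : SimpleGraph V) [DecidableRel G.Adj] (v : V) :
    degMS (G.comap (Subtype.val : {y : V // y ≠ v} → V))
      = (Finset.univ.val.erase v).map
          (fun y => G.degree y - if G.Adj y v then 1 else 0) := by
  classical
  unfold degMS
  rw [Multiset.map_congr rfl (fun x _ => ncard_comap G v x)]
  have h1 : (Finset.univ.val.map (Subtype.val : {y : V // y ≠ v} → V)).map
      (fun y => G.degree y - if G.Adj y v then 1 else 0)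
      = (Finset.univ.val.erase v).map
          (fun y => G.degree y - if G.Adj y v then 1 else 0) := by
    rw [Finset.univ_val_map_subtype_val, Finset.filter_ne', ← Finset.erase_val]
  rw [← h1, Multiset.map_map]
  rfl

lemma degMS_cons (G : SimpleGraph V) [DecidableRel G.Adj] (v : V) :
    degMS G = G.degree v ::ₘ (Finset.univ.val.erase v).map (fun y => G.degree y) := by
  rw [degMS_eq]
  conv_lhs => rw [← Multiset.cons_erase (show v ∈ Finset.univ.val from Finset.mem_univ_val v)]
  rw [Multiset.map_cons]

end Aux2


noncomputable def extendIso {V W : Type} (v : V) (u : W)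
    {G : SimpleGraph V} {H : SimpleGraph W}
    (φ : (G.comap (Subtype.val : {y : V // y ≠ v} → V)) ≃g
         (H.comap (Subtype.val : {y : W // y ≠ u} → W)))
    (hadj : ∀ (x : {y : V // y ≠ v}), G.Adj v x.val ↔ H.Adj u (φ x).val) : G ≃g H := by
  classical
  refine ⟨⟨fun x => if h : x = v then u else (φ ⟨x, h⟩).val,
          fun y => if h : y = u then v else (φ.symm ⟨y, h⟩).val, ?_, ?_⟩, ?_⟩
  · intro x
    by_cases h : x = v
    · simp [h]
    · simp only [dif_neg h, dif_neg (φ ⟨x, h⟩).prop]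
      have : (⟨(φ ⟨x, h⟩).val, (φ ⟨x, h⟩).prop⟩ : {y : W // y ≠ u}) = φ ⟨x, h⟩ := rfl
      rw [this, RelIso.symm_apply_apply]
  · intro y
    by_cases h : y = u
    · simp [h]
    · simp only [dif_neg h, dif_neg (φ.symm ⟨y, h⟩).prop]
      have : (⟨(φ.symm ⟨y, h⟩).val, (φ.symm ⟨y, h⟩).prop⟩ : {y : V // y ≠ v}) = φ.symm ⟨y, h⟩ := rfl
      rw [this, RelIso.apply_symm_apply]
  · intro a b
    simp only [Equiv.coe_fn_mk]
    by_cases ha : a = v <;> by_cases hb : b = v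
    · subst ha; subst hb
      simp only [dif_pos rfl]
      constructor
      · intro q; exact absurd rfl q.ne
      · intro q; exact absurd rfl q.ne
    · subst ha
      rw [dif_pos rfl, dif_neg hb]
      exact (hadj ⟨b, hb⟩).symm
    · subst hb
      rw [dif_pos rfl, dif_neg ha]
      constructor
      · intro q; exact ((hadj ⟨a, ha⟩).mpr q.symm).symm
      · intro q; exact ((hadj ⟨a, ha⟩).mp q.symm).symm
    · rw [dif_neg ha, dif_neg hb]
      exact φ.map_rel_iff (a := ⟨a, ha⟩) (b := ⟨b, hb⟩)

lemma main_ind (n : ℕ) : ∀ (V : Type) (iV : Fintype V) (G : SimpleGraph V),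
    Fintype.card V = n → (∀ a b c d : V, ¬ A4 G a b c d) →
    ∀ (W : Type) (iW : Fintype W) (H : SimpleGraph W),
      degMS G = degMS H → Nonempty (G ≃g H) := by
  induction n using Nat.strong_induction_on with
  | _ n ih =>
  intro V iV G hcard hA4 W iW H hdeg
  classical
  have hcW : Fintype.card W = Fintype.card V := by
    rw [← degMS_card G, ← degMS_card H, hdeg]
  by_cases hV : IsEmpty V
  · haveI : IsEmpty W := Fintype.card_eq_zero_iff.mp
      (by rw [hcW]; exact Fintype.card_eq_zero)
    exact ⟨⟨Equiv.equivOfIsEmpty V W, fun {a b} => isEmptyElim a⟩⟩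
  haveI : Nonempty V := not_isEmpty_iff.mp hV
  haveI : DecidableRel G.Adj := Classical.decRel _
  haveI : DecidableRel H.Adj := Classical.decRel _
  have hn : 0 < n := hcard ▸ Fintype.card_pos
  -- common facts
  have comapA4 : ∀ (v : V), ∀ a b c d, ¬ A4 (G.comap (Subtype.val : {y : V // y ≠ v} → V)) a b c d := by
    rintro v a b c d ⟨h1, h2, h3, h4, h5, h6, e1, e2, e3, e4⟩
    exact hA4 a.val b.val c.val d.val
      ⟨fun q => h1 (Subtype.ext q), fun q => h2 (Subtype.ext q), fun q => h3 (Subtype.ext q),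
       fun q => h4 (Subtype.ext q), fun q => h5 (Subtype.ext q), fun q => h6 (Subtype.ext q),
       e1, e2, e3, e4⟩
  have hcard' : ∀ v : V, Fintype.card {y : V // y ≠ v} = n - 1 := by
    intro v
    rw [← hcard]
    simp [Fintype.card_subtype_compl]
  rcases exists_iso_or_dom G hA4 with ⟨v, hv⟩ | ⟨v, hv⟩
  · -- isolated vertex case
    have hdv : G.degree v = 0 := by
      rw [SimpleGraph.degree, Finset.card_eq_zero, Finset.eq_empty_iff_forall_notMem]
      intro w hwmem
      exact hv w ((mem_neighborFinset _ _ _).mp hwmem)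
    have hmem : (0 : ℕ) ∈ degMS H := by
      rw [← hdeg, degMS_cons G v, hdv]
      exact Multiset.mem_cons_self _ _
    rw [degMS_eq H] at hmem
    obtain ⟨u, -, hdu⟩ := Multiset.mem_map.mp hmem
    have hu : ∀ w, ¬ H.Adj u w := by
      intro w hw
      have : w ∈ H.neighborFinset u := (mem_neighborFinset _ _ _).mpr hw
      rw [Finset.card_eq_zero.mp hdu] at this
      exact absurd this (Finset.notMem_empty w)
    have hMgh : (Finset.univ.val.erase v).map (fun y => G.degree y)
        = (Finset.univ.val.erase u).map (fun y => H.degree y) := by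
      have h1 := degMS_cons G v
      have h2 := degMS_cons H u
      rw [hdv] at h1
      rw [show H.degree u = 0 from hdu] at h2
      rw [h1, h2] at hdeg
      exact (Multiset.cons_inj_right _).mp hdeg
    have hdeg' : degMS (G.comap (Subtype.val : {y : V // y ≠ v} → V))
        = degMS (H.comap (Subtype.val : {y : W // y ≠ u} → W)) := by
      rw [degMS_comap G v, degMS_comap H u]
      have e1 : (Finset.univ.val.erase v).map (fun y => G.degree y - if G.Adj y v then 1 else 0)
          = (Finset.univ.val.erase v).map (fun y => G.degree y) := by
        refine Multiset.map_congr rfl (fun y _ => ?_)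
        rw [if_neg (fun q : G.Adj y v => hv y q.symm)]
        omega
      have e2 : (Finset.univ.val.erase u).map (fun y => H.degree y - if H.Adj y u then 1 else 0)
          = (Finset.univ.val.erase u).map (fun y => H.degree y) := by
        refine Multiset.map_congr rfl (fun y _ => ?_)
        rw [if_neg (fun q : H.Adj y u => hu y q.symm)]
        omega
      rw [e1, e2, hMgh]
    obtain ⟨φ⟩ := ih (n - 1) (by omega) _ _ _ (hcard' v) (comapA4 v) _
      (Subtype.fintype _) _ hdeg'
    exact ⟨extendIso v u φ (fun x => iff_of_false (hv x.val) (hu (φ x).val))⟩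
  · -- dominating vertex case
    have hnfv : G.neighborFinset v = Finset.univ.erase v := by
      ext w
      rw [mem_neighborFinset, Finset.mem_erase]
      exact ⟨fun q => ⟨q.ne', Finset.mem_univ w⟩, fun q => hv w q.1⟩
    have hdv : G.degree v = n - 1 := by
      rw [SimpleGraph.degree, hnfv, Finset.card_erase_of_mem (Finset.mem_univ v),
        Finset.card_univ, hcard]
    have hmem : (n - 1 : ℕ) ∈ degMS H := by
      rw [← hdeg, degMS_cons G v, hdv]
      exact Multiset.mem_cons_self _ _
    rw [degMS_eq H] at hmem
    obtain ⟨u, -, hdu⟩ := Multiset.mem_map.mp hmem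
    have hnfu : H.neighborFinset u = Finset.univ.erase u := by
      apply Finset.eq_of_subset_of_card_le
      · intro w hw
        rw [mem_neighborFinset] at hw
        exact Finset.mem_erase.mpr ⟨hw.ne', Finset.mem_univ w⟩
      · rw [Finset.card_erase_of_mem (Finset.mem_univ u), Finset.card_univ, hcW, hcard,
          card_neighborFinset_eq_degree, hdu]
    have hu : ∀ w, w ≠ u → H.Adj u w := by
      intro w hwu
      rw [← mem_neighborFinset, hnfu]
      exact Finset.mem_erase.mpr ⟨hwu, Finset.mem_univ w⟩
    have hMgh : (Finset.univ.val.erase v).map (fun y => G.degree y)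
        = (Finset.univ.val.erase u).map (fun y => H.degree y) := by
      have h1 := degMS_cons G v
      have h2 := degMS_cons H u
      rw [hdv] at h1
      rw [show H.degree u = n - 1 from hdu] at h2
      rw [h1, h2] at hdeg
      exact (Multiset.cons_inj_right _).mp hdeg
    have hdeg' : degMS (G.comap (Subtype.val : {y : V // y ≠ v} → V))
        = degMS (H.comap (Subtype.val : {y : W // y ≠ u} → W)) := by
      rw [degMS_comap G v, degMS_comap H u]
      have e1 : (Finset.univ.val.erase v).map (fun y => G.degree y - if G.Adj y v then 1 else 0)
          = ((Finset.univ.val.erase v).map (fun y => G.degree y)).map (fun m => m - 1) := by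
        rw [Multiset.map_map]
        refine Multiset.map_congr rfl (fun y hy => ?_)
        have hyv : y ≠ v := ((Finset.univ.nodup).mem_erase_iff.mp hy).1
        rw [if_pos ((hv y hyv).symm)]
        rfl
      have e2 : (Finset.univ.val.erase u).map (fun y => H.degree y - if H.Adj y u then 1 else 0)
          = ((Finset.univ.val.erase u).map (fun y => H.degree y)).map (fun m => m - 1) := by
        rw [Multiset.map_map]
        refine Multiset.map_congr rfl (fun y hy => ?_)
        have hyu : y ≠ u := ((Finset.univ.nodup).mem_erase_iff.mp hy).1
        rw [if_pos ((hu y hyu).symm)]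
        rfl
      rw [e1, e2, hMgh]
    obtain ⟨φ⟩ := ih (n - 1) (by omega) _ _ _ (hcard' v) (comapA4 v) _
      (Subtype.fintype _) _ hdeg'
    exact ⟨extendIso v u φ (fun x => iff_of_true (hv x.val x.prop) (hu (φ x).val (φ x).prop))⟩


theorem stmt_17 {V : Type} [Fintype V] (G : SimpleGraph V)
    (h : ∀ a b c d : V, ¬ A4 G a b c d) : IsUnigraph G := by
  intro W iW H hdeg
  exact main_ind (Fintype.card V) V inferInstance G rfl h W iW H hdeg
end

section
/- Let G be a finite simple graph containing an alternating 4-cycle ⟨p,q:r,s⟩ together with a fifth vertex u with edges up, uq and non-edges ur, us (the configuration whose realizations are the house, K2+K3, and the co-4-pan). If the graph H obtained from G by the 2-switch on ⟨p,q:r,s⟩ is isomorphic to G, then G contains some vertex v ∉ {p,q,r,s} whose neighborhood intersects {p,q,r,s} in exactly {q,r} or exactly {p,s}. -/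
open SimpleGraph

/-- Isomorphic graphs on the same fintype have the same number of `n`-cliques. -/
lemma aux_clique_card {V : Type*} [Fintype V] [DecidableEq V] {G H : SimpleGraph V}
    [DecidableRel G.Adj] [DecidableRel H.Adj] (φ : G ≃g H) (n : ℕ) :
    (G.cliqueFinset n).card = (H.cliqueFinset n).card := by
  have key : ∀ (G' H' : SimpleGraph V), ∀ (_ : DecidableRel G'.Adj)
      (_ : DecidableRel H'.Adj), ∀ (ψ : G' ≃g H'), ∀ t, t ∈ G'.cliqueFinset n →
      t.image ψ ∈ H'.cliqueFinset n := by
    intro G' H' _ _ ψ t ht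
    rw [SimpleGraph.mem_cliqueFinset_iff] at ht ⊢
    obtain ⟨hc, hcard⟩ := ht
    constructor
    · rintro a ha b hb hab
      simp only [Finset.coe_image, Set.mem_image, Finset.mem_coe] at ha hb
      obtain ⟨a', ha', rfl⟩ := ha
      obtain ⟨b', hb', rfl⟩ := hb
      rw [ψ.map_adj_iff]
      exact hc ha' hb' (fun hh => hab (by rw [hh]))
    · rw [Finset.card_image_of_injective _ ψ.injective, hcard]
  apply Finset.card_bij (fun t _ => t.image φ)
  · intro t ht; exact key G H _ _ φ t ht
  · intro t1 h1 t2 h2 heq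
    exact Finset.image_injective φ.injective heq
  · intro t ht
    refine ⟨t.image φ.symm, key H G _ _ φ.symm t ht, ?_⟩
    rw [Finset.image_image]
    have : ((φ : V → V) ∘ (φ.symm : V → V)) = id := by funext x; simp
    rw [this, Finset.image_id]

set_option maxHeartbeats 2000000 in
theorem stmt_18 {V : Type*} [Fintype V] (G : SimpleGraph V) (p q r s u : V)
    (h : A4 G p q r s) (hu : u ∉ ({p, q, r, s} : Set V))
    (hup : G.Adj u p) (huq : G.Adj u q) (hur : ¬ G.Adj u r) (hus : ¬ G.Adj u s)
    (hiso : Nonempty (G ≃g twoSwitch G p q r s)) :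
    ∃ v : V, v ∉ ({p, q, r, s} : Set V) ∧
      ((G.Adj v q ∧ G.Adj v r ∧ ¬ G.Adj v p ∧ ¬ G.Adj v s) ∨
       (G.Adj v p ∧ G.Adj v s ∧ ¬ G.Adj v q ∧ ¬ G.Adj v r)) := by
  classical
  obtain ⟨hpq, hpr, hps, hqr, hqs, hrs, hapq, hars, hnqr, hnps⟩ := h
  set H := twoSwitch G p q r s with hHdef
  -- adjacency characterization of H
  have hH : ∀ x y : V, H.Adj x y ↔
      ((G.Adj x y ∧ s(x,y) ≠ s(p,q) ∧ s(x,y) ≠ s(r,s)) ∨ s(x,y) = s(q,r) ∨ s(x,y) = s(p,s)) := by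
    intro x y
    rw [hHdef, twoSwitch, SimpleGraph.fromEdgeSet_adj]
    simp only [Set.mem_union, Set.mem_diff, Set.mem_insert_iff, Set.mem_singleton_iff,
      SimpleGraph.mem_edgeSet]
    constructor
    · rintro ⟨hm, hne⟩
      tauto
    · intro hcase
      refine ⟨by tauto, ?_⟩
      rcases hcase with ⟨hadj, -⟩ | hc | hc
      · exact hadj.ne
      · rw [Sym2.eq_iff] at hc
        rcases hc with ⟨rfl, rfl⟩ | ⟨rfl, rfl⟩
        · exact hqr
        · exact hqr.symm
      · rw [Sym2.eq_iff] at hc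
        rcases hc with ⟨rfl, rfl⟩ | ⟨rfl, rfl⟩
        · exact hps
        · exact hps.symm
  -- special edges/non-edges of H
  have hHqr : H.Adj q r := (hH q r).2 (Or.inr (Or.inl rfl))
  have hHps : H.Adj p s := (hH p s).2 (Or.inr (Or.inr rfl))
  have hHnpq : ¬ H.Adj p q := by
    intro hadj
    rcases (hH p q).1 hadj with ⟨-, hne, -⟩ | hc | hc
    · exact hne rfl
    · rw [Sym2.eq_iff] at hc
      rcases hc with ⟨h1, h2⟩ | ⟨h1, h2⟩
      · exact hpq h1
      · exact hpr h1
    · rw [Sym2.eq_iff] at hc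
      rcases hc with ⟨h1, h2⟩ | ⟨h1, h2⟩
      · exact hqs h2
      · exact hps h1
  have hHnrs : ¬ H.Adj r s := by
    intro hadj
    rcases (hH r s).1 hadj with ⟨-, -, hne⟩ | hc | hc
    · exact hne rfl
    · rw [Sym2.eq_iff] at hc
      rcases hc with ⟨h1, h2⟩ | ⟨h1, h2⟩
      · exact hqr h1.symm
      · exact hqs h2.symm
    · rw [Sym2.eq_iff] at hc
      rcases hc with ⟨h1, h2⟩ | ⟨h1, h2⟩
      · exact hpr h1.symm
      · exact hrs h1
  -- transfer for vertices outside {p,q,r,s}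
  have hout : ∀ x, x ≠ p → x ≠ q → x ≠ r → x ≠ s → ∀ y, (H.Adj x y ↔ G.Adj x y) := by
    intro x hxp hxq hxr hxs y
    rw [hH]
    constructor
    · rintro (⟨hadj, -, -⟩ | hc | hc)
      · exact hadj
      · rw [Sym2.eq_iff] at hc
        rcases hc with ⟨rfl, rfl⟩ | ⟨rfl, rfl⟩ <;> simp_all
      · rw [Sym2.eq_iff] at hc
        rcases hc with ⟨rfl, rfl⟩ | ⟨rfl, rfl⟩ <;> simp_all
    · intro hadj
      refine Or.inl ⟨hadj, ?_, ?_⟩ <;>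
      · intro hc
        rw [Sym2.eq_iff] at hc
        rcases hc with ⟨rfl, rfl⟩ | ⟨rfl, rfl⟩ <;> simp_all
  -- the four apex sets
  set A : Finset V := Finset.univ.filter
    (fun x => x ≠ p ∧ x ≠ q ∧ x ≠ r ∧ x ≠ s ∧ G.Adj x p ∧ G.Adj x q) with hA
  set B : Finset V := Finset.univ.filter
    (fun x => x ≠ p ∧ x ≠ q ∧ x ≠ r ∧ x ≠ s ∧ G.Adj x r ∧ G.Adj x s) with hB
  set C : Finset V := Finset.univ.filter
    (fun x => x ≠ p ∧ x ≠ q ∧ x ≠ r ∧ x ≠ s ∧ G.Adj x q ∧ G.Adj x r) with hC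
  set D : Finset V := Finset.univ.filter
    (fun x => x ≠ p ∧ x ≠ q ∧ x ≠ r ∧ x ≠ s ∧ G.Adj x p ∧ G.Adj x s) with hD
  set TG : Finset (Finset V) := G.cliqueFinset 3 with hTG
  set TH : Finset (Finset V) := H.cliqueFinset 3 with hTH
  -- characterize TG \ TH
  have claim1 : TG \ TH =
      A.image (fun x => ({p, q, x} : Finset V)) ∪ B.image (fun x => ({r, s, x} : Finset V)) := by
    ext t
    simp only [Finset.mem_sdiff, Finset.mem_union, Finset.mem_image, hTG, hTH,
      SimpleGraph.mem_cliqueFinset_iff]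
    constructor
    · rintro ⟨ht, hnt⟩
      obtain ⟨a, b, c, hab, hac, hbc, rfl⟩ := SimpleGraph.is3Clique_iff.1 ht
      rw [SimpleGraph.is3Clique_triple_iff] at hnt
      push_neg at hnt
      have killed : ∀ x y : V, G.Adj x y → ¬ H.Adj x y →
          (s(x,y) = s(p,q) ∨ s(x,y) = s(r,s)) := by
        intro x y hxy hnxy
        by_contra hcon
        push_neg at hcon
        exact hnxy ((hH x y).2 (Or.inl ⟨hxy, hcon.1, hcon.2⟩))
      have hPQ : ∀ x : V, G.Adj p x → G.Adj q x → ∀ t' : Finset V, t' = {p, q, x} →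
          ((∃ y ∈ A, ({p, q, y} : Finset V) = t') ∨ ∃ y ∈ B, ({r, s, y} : Finset V) = t') := by
        intro x h1 h2 t' ht'
        refine Or.inl ⟨x, ?_, ht'.symm⟩
        rw [hA, Finset.mem_filter]
        refine ⟨Finset.mem_univ _, h1.ne', h2.ne', ?_, ?_, h1.symm, h2.symm⟩
        · rintro rfl; exact hnqr h2
        · rintro rfl; exact hnps h1
      have hRS : ∀ x : V, G.Adj r x → G.Adj s x → ∀ t' : Finset V, t' = {r, s, x} →
          ((∃ y ∈ A, ({p, q, y} : Finset V) = t') ∨ ∃ y ∈ B, ({r, s, y} : Finset V) = t') := by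
        intro x h1 h2 t' ht'
        refine Or.inr ⟨x, ?_, ht'.symm⟩
        rw [hB, Finset.mem_filter]
        refine ⟨Finset.mem_univ _, ?_, ?_, h1.ne', h2.ne', h1.symm, h2.symm⟩
        · rintro rfl; exact hnps h2.symm
        · rintro rfl; exact hnqr h1.symm
      by_cases e1 : H.Adj a b
      · by_cases e2 : H.Adj a c
        · have e3 : ¬ H.Adj b c := fun hh => hnt e1 e2 hh
          rcases killed b c hbc e3 with hk | hk <;> rw [Sym2.eq_iff] at hk <;>
            rcases hk with ⟨rfl, rfl⟩ | ⟨rfl, rfl⟩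
          · exact hPQ a hab.symm hac.symm _ (by ext w; simp only [Finset.mem_insert, Finset.mem_singleton]; try tauto)
          · exact hPQ a hac.symm hab.symm _ (by ext w; simp only [Finset.mem_insert, Finset.mem_singleton]; try tauto)
          · exact hRS a hab.symm hac.symm _ (by ext w; simp only [Finset.mem_insert, Finset.mem_singleton]; try tauto)
          · exact hRS a hac.symm hab.symm _ (by ext w; simp only [Finset.mem_insert, Finset.mem_singleton]; try tauto)
        · rcases killed a c hac e2 with hk | hk <;> rw [Sym2.eq_iff] at hk <;>
            rcases hk with ⟨rfl, rfl⟩ | ⟨rfl, rfl⟩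
          · exact hPQ b hab hbc.symm _ (by ext w; simp only [Finset.mem_insert, Finset.mem_singleton]; try tauto)
          · exact hPQ b hbc.symm hab _ (by ext w; simp only [Finset.mem_insert, Finset.mem_singleton]; try tauto)
          · exact hRS b hab hbc.symm _ (by ext w; simp only [Finset.mem_insert, Finset.mem_singleton]; try tauto)
          · exact hRS b hbc.symm hab _ (by ext w; simp only [Finset.mem_insert, Finset.mem_singleton]; try tauto)
      · rcases killed a b hab e1 with hk | hk <;> rw [Sym2.eq_iff] at hk <;>
          rcases hk with ⟨rfl, rfl⟩ | ⟨rfl, rfl⟩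
        · exact hPQ c hac hbc _ (by ext w; simp only [Finset.mem_insert, Finset.mem_singleton]; try tauto)
        · exact hPQ c hbc hac _ (by ext w; simp only [Finset.mem_insert, Finset.mem_singleton]; try tauto)
        · exact hRS c hac hbc _ (by ext w; simp only [Finset.mem_insert, Finset.mem_singleton]; try tauto)
        · exact hRS c hbc hac _ (by ext w; simp only [Finset.mem_insert, Finset.mem_singleton]; try tauto)
    · rintro (⟨x, hx, rfl⟩ | ⟨x, hx, rfl⟩)
      · rw [hA, Finset.mem_filter] at hx
        obtain ⟨-, hxp, hxq, hxr, hxs, h1, h2⟩ := hx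
        constructor
        · exact SimpleGraph.is3Clique_triple_iff.2 ⟨hapq, h1.symm, h2.symm⟩
        · intro hcl
          rw [SimpleGraph.is3Clique_triple_iff] at hcl
          exact hHnpq hcl.1
      · rw [hB, Finset.mem_filter] at hx
        obtain ⟨-, hxp, hxq, hxr, hxs, h1, h2⟩ := hx
        constructor
        · exact SimpleGraph.is3Clique_triple_iff.2 ⟨hars, h1.symm, h2.symm⟩
        · intro hcl
          rw [SimpleGraph.is3Clique_triple_iff] at hcl
          exact hHnrs hcl.1
  -- characterize TH \ TG
  have claim2 : TH \ TG =
      C.image (fun x => ({q, r, x} : Finset V)) ∪ D.image (fun x => ({p, s, x} : Finset V)) := by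
    ext t
    simp only [Finset.mem_sdiff, Finset.mem_union, Finset.mem_image, hTG, hTH,
      SimpleGraph.mem_cliqueFinset_iff]
    constructor
    · rintro ⟨ht, hnt⟩
      obtain ⟨a, b, c, hab, hac, hbc, rfl⟩ := SimpleGraph.is3Clique_iff.1 ht
      rw [SimpleGraph.is3Clique_triple_iff] at hnt
      push_neg at hnt
      have born : ∀ x y : V, H.Adj x y → ¬ G.Adj x y →
          (s(x,y) = s(q,r) ∨ s(x,y) = s(p,s)) := by
        intro x y hxy hnxy
        rcases (hH x y).1 hxy with ⟨hadj, -, -⟩ | hc | hc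
        · exact absurd hadj hnxy
        · exact Or.inl hc
        · exact Or.inr hc
      have hQR : ∀ x : V, H.Adj q x → H.Adj r x → ∀ t' : Finset V, t' = {q, r, x} →
          ((∃ y ∈ C, ({q, r, y} : Finset V) = t') ∨ ∃ y ∈ D, ({p, s, y} : Finset V) = t') := by
        intro x h1 h2 t' ht'
        have hxq : x ≠ q := h1.ne'
        have hxr : x ≠ r := h2.ne'
        have hxp : x ≠ p := by rintro rfl; exact hHnpq h1.symm
        have hxs : x ≠ s := by rintro rfl; exact hHnrs h2
        refine Or.inl ⟨x, ?_, ht'.symm⟩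
        rw [hC, Finset.mem_filter]
        exact ⟨Finset.mem_univ _, hxp, hxq, hxr, hxs,
          (hout x hxp hxq hxr hxs q).1 h1.symm, (hout x hxp hxq hxr hxs r).1 h2.symm⟩
      have hPS : ∀ x : V, H.Adj p x → H.Adj s x → ∀ t' : Finset V, t' = {p, s, x} →
          ((∃ y ∈ C, ({q, r, y} : Finset V) = t') ∨ ∃ y ∈ D, ({p, s, y} : Finset V) = t') := by
        intro x h1 h2 t' ht'
        have hxp : x ≠ p := h1.ne'
        have hxs : x ≠ s := h2.ne'
        have hxq : x ≠ q := by rintro rfl; exact hHnpq h1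
        have hxr : x ≠ r := by rintro rfl; exact hHnrs h2.symm
        refine Or.inr ⟨x, ?_, ht'.symm⟩
        rw [hD, Finset.mem_filter]
        exact ⟨Finset.mem_univ _, hxp, hxq, hxr, hxs,
          (hout x hxp hxq hxr hxs p).1 h1.symm, (hout x hxp hxq hxr hxs s).1 h2.symm⟩
      by_cases e1 : G.Adj a b
      · by_cases e2 : G.Adj a c
        · have e3 : ¬ G.Adj b c := fun hh => hnt e1 e2 hh
          rcases born b c hbc e3 with hk | hk <;> rw [Sym2.eq_iff] at hk <;>
            rcases hk with ⟨rfl, rfl⟩ | ⟨rfl, rfl⟩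
          · exact hQR a hab.symm hac.symm _ (by ext w; simp only [Finset.mem_insert, Finset.mem_singleton]; try tauto)
          · exact hQR a hac.symm hab.symm _ (by ext w; simp only [Finset.mem_insert, Finset.mem_singleton]; try tauto)
          · exact hPS a hab.symm hac.symm _ (by ext w; simp only [Finset.mem_insert, Finset.mem_singleton]; try tauto)
          · exact hPS a hac.symm hab.symm _ (by ext w; simp only [Finset.mem_insert, Finset.mem_singleton]; try tauto)
        · rcases born a c hac e2 with hk | hk <;> rw [Sym2.eq_iff] at hk <;>
            rcases hk with ⟨rfl, rfl⟩ | ⟨rfl, rfl⟩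
          · exact hQR b hab hbc.symm _ (by ext w; simp only [Finset.mem_insert, Finset.mem_singleton]; try tauto)
          · exact hQR b hbc.symm hab _ (by ext w; simp only [Finset.mem_insert, Finset.mem_singleton]; try tauto)
          · exact hPS b hab hbc.symm _ (by ext w; simp only [Finset.mem_insert, Finset.mem_singleton]; try tauto)
          · exact hPS b hbc.symm hab _ (by ext w; simp only [Finset.mem_insert, Finset.mem_singleton]; try tauto)
      · rcases born a b hab e1 with hk | hk <;> rw [Sym2.eq_iff] at hk <;>
          rcases hk with ⟨rfl, rfl⟩ | ⟨rfl, rfl⟩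
        · exact hQR c hac hbc _ (by ext w; simp only [Finset.mem_insert, Finset.mem_singleton]; try tauto)
        · exact hQR c hbc hac _ (by ext w; simp only [Finset.mem_insert, Finset.mem_singleton]; try tauto)
        · exact hPS c hac hbc _ (by ext w; simp only [Finset.mem_insert, Finset.mem_singleton]; try tauto)
        · exact hPS c hbc hac _ (by ext w; simp only [Finset.mem_insert, Finset.mem_singleton]; try tauto)
    · rintro (⟨x, hx, rfl⟩ | ⟨x, hx, rfl⟩)
      · rw [hC, Finset.mem_filter] at hx
        obtain ⟨-, hxp, hxq, hxr, hxs, h1, h2⟩ := hx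
        constructor
        · exact SimpleGraph.is3Clique_triple_iff.2 ⟨hHqr,
            ((hout x hxp hxq hxr hxs q).2 h1).symm, ((hout x hxp hxq hxr hxs r).2 h2).symm⟩
        · intro hcl
          rw [SimpleGraph.is3Clique_triple_iff] at hcl
          exact hnqr hcl.1
      · rw [hD, Finset.mem_filter] at hx
        obtain ⟨-, hxp, hxq, hxr, hxs, h1, h2⟩ := hx
        constructor
        · exact SimpleGraph.is3Clique_triple_iff.2 ⟨hHps,
            ((hout x hxp hxq hxr hxs p).2 h1).symm, ((hout x hxp hxq hxr hxs s).2 h2).symm⟩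
        · intro hcl
          rw [SimpleGraph.is3Clique_triple_iff] at hcl
          exact hnps hcl.1
  -- cardinalities
  obtain ⟨φ⟩ := hiso
  have hcards : TG.card = TH.card := aux_clique_card φ 3
  have hsd : (TG \ TH).card = (TH \ TG).card := Finset.card_sdiff_comm hcards
  have hinjA : Set.InjOn (fun x => ({p, q, x} : Finset V)) ↑A := by
    intro x hx y hy hxy
    rw [Finset.mem_coe, hA, Finset.mem_filter] at hx hy
    have hxy' : ({p, q, x} : Finset V) = {p, q, y} := hxy
    have : y ∈ ({p, q, x} : Finset V) := by rw [hxy']; simp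
    simp only [Finset.mem_insert, Finset.mem_singleton] at this
    rcases this with h' | h' | h'
    · exact absurd h' hy.2.1
    · exact absurd h' hy.2.2.1
    · exact h'.symm
  have hinjB : Set.InjOn (fun x => ({r, s, x} : Finset V)) ↑B := by
    intro x hx y hy hxy
    rw [Finset.mem_coe, hB, Finset.mem_filter] at hx hy
    have hxy' : ({r, s, x} : Finset V) = {r, s, y} := hxy
    have : y ∈ ({r, s, x} : Finset V) := by rw [hxy']; simp
    simp only [Finset.mem_insert, Finset.mem_singleton] at this
    rcases this with h' | h' | h'
    · exact absurd h' hy.2.2.2.1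
    · exact absurd h' hy.2.2.2.2.1
    · exact h'.symm
  have hinjC : Set.InjOn (fun x => ({q, r, x} : Finset V)) ↑C := by
    intro x hx y hy hxy
    rw [Finset.mem_coe, hC, Finset.mem_filter] at hx hy
    have hxy' : ({q, r, x} : Finset V) = {q, r, y} := hxy
    have : y ∈ ({q, r, x} : Finset V) := by rw [hxy']; simp
    simp only [Finset.mem_insert, Finset.mem_singleton] at this
    rcases this with h' | h' | h'
    · exact absurd h' hy.2.2.1
    · exact absurd h' hy.2.2.2.1
    · exact h'.symm
  have hinjD : Set.InjOn (fun x => ({p, s, x} : Finset V)) ↑D := by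
    intro x hx y hy hxy
    rw [Finset.mem_coe, hD, Finset.mem_filter] at hx hy
    have hxy' : ({p, s, x} : Finset V) = {p, s, y} := hxy
    have : y ∈ ({p, s, x} : Finset V) := by rw [hxy']; simp
    simp only [Finset.mem_insert, Finset.mem_singleton] at this
    rcases this with h' | h' | h'
    · exact absurd h' hy.2.1
    · exact absurd h' hy.2.2.2.2.1
    · exact h'.symm
  have hdisAB : Disjoint (A.image (fun x => ({p, q, x} : Finset V)))
      (B.image (fun x => ({r, s, x} : Finset V))) := by
    rw [Finset.disjoint_left]
    rintro t ht1 ht2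
    simp only [Finset.mem_image] at ht1 ht2
    obtain ⟨x, hx, rfl⟩ := ht1
    obtain ⟨y, hy, hxy⟩ := ht2
    rw [hA, Finset.mem_filter] at hx
    rw [hB, Finset.mem_filter] at hy
    have hr : r ∈ ({p, q, x} : Finset V) := by rw [← hxy]; simp
    have hs' : s ∈ ({p, q, x} : Finset V) := by rw [← hxy]; simp
    simp only [Finset.mem_insert, Finset.mem_singleton] at hr hs'
    rcases hr with h' | h' | h'
    · exact hpr h'.symm
    · exact hqr h'.symm
    · rcases hs' with h'' | h'' | h''
      · exact hps h''.symm
      · exact hqs h''.symm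
      · exact hrs (h'.trans h''.symm)
  have hdisCD : Disjoint (C.image (fun x => ({q, r, x} : Finset V)))
      (D.image (fun x => ({p, s, x} : Finset V))) := by
    rw [Finset.disjoint_left]
    rintro t ht1 ht2
    simp only [Finset.mem_image] at ht1 ht2
    obtain ⟨x, hx, rfl⟩ := ht1
    obtain ⟨y, hy, hxy⟩ := ht2
    rw [hC, Finset.mem_filter] at hx
    rw [hD, Finset.mem_filter] at hy
    have hp' : p ∈ ({q, r, x} : Finset V) := by rw [← hxy]; simp
    have hs' : s ∈ ({q, r, x} : Finset V) := by rw [← hxy]; simp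
    simp only [Finset.mem_insert, Finset.mem_singleton] at hp' hs'
    rcases hp' with h' | h' | h'
    · exact hpq h'
    · exact hpr h'
    · rcases hs' with h'' | h'' | h''
      · exact hqs h''.symm
      · exact hrs h''.symm
      · exact hps (h'.trans h''.symm)
  have cardAB : (TG \ TH).card = A.card + B.card := by
    rw [claim1, Finset.card_union_of_disjoint hdisAB,
      Finset.card_image_of_injOn hinjA, Finset.card_image_of_injOn hinjB]
  have cardCD : (TH \ TG).card = C.card + D.card := by
    rw [claim2, Finset.card_union_of_disjoint hdisCD,
      Finset.card_image_of_injOn hinjC, Finset.card_image_of_injOn hinjD]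
  have hsum : A.card + B.card = C.card + D.card := by rw [← cardAB, ← cardCD, hsd]
  have hinter : A ∩ B = C ∩ D := by
    ext x
    simp only [Finset.mem_inter, hA, hB, hC, hD, Finset.mem_filter, Finset.mem_univ, true_and]
    tauto
  have hunion : (A ∪ B).card = (C ∪ D).card := by
    have h1 := Finset.card_union_add_card_inter A B
    have h2 := Finset.card_union_add_card_inter C D
    rw [hinter] at h1
    omega
  -- final contradiction argument
  by_contra hcon
  push_neg at hcon
  have hsub : C ∪ D ⊆ (A ∪ B).erase u := by
    intro x hx
    rw [Finset.mem_union] at hx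
    rcases hx with hx | hx
    · rw [hC, Finset.mem_filter] at hx
      obtain ⟨-, hxp, hxq, hxr, hxs, h1, h2⟩ := hx
      have hxmem : x ∉ ({p, q, r, s} : Set V) := by
        simp only [Set.mem_insert_iff, Set.mem_singleton_iff]
        push_neg
        exact ⟨hxp, hxq, hxr, hxs⟩
      have hx' := hcon x hxmem
      rw [Finset.mem_erase]
      refine ⟨fun hxu => hur (hxu ▸ h2), ?_⟩
      rw [Finset.mem_union, hA, hB, Finset.mem_filter, Finset.mem_filter]
      rcases Classical.em (G.Adj x p) with hp' | hp'
      · exact Or.inl ⟨Finset.mem_univ _, hxp, hxq, hxr, hxs, hp', h1⟩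
      · rcases Classical.em (G.Adj x s) with hs'' | hs''
        · exact Or.inr ⟨Finset.mem_univ _, hxp, hxq, hxr, hxs, h2, hs''⟩
        · exact absurd (hx'.1 h1 h2 hp') hs''
    · rw [hD, Finset.mem_filter] at hx
      obtain ⟨-, hxp, hxq, hxr, hxs, h1, h2⟩ := hx
      have hxmem : x ∉ ({p, q, r, s} : Set V) := by
        simp only [Set.mem_insert_iff, Set.mem_singleton_iff]
        push_neg
        exact ⟨hxp, hxq, hxr, hxs⟩
      have hx' := hcon x hxmem
      rw [Finset.mem_erase]
      refine ⟨fun hxu => hus (hxu ▸ h2), ?_⟩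
      rw [Finset.mem_union, hA, hB, Finset.mem_filter, Finset.mem_filter]
      rcases Classical.em (G.Adj x q) with hq' | hq'
      · exact Or.inl ⟨Finset.mem_univ _, hxp, hxq, hxr, hxs, h1, hq'⟩
      · rcases Classical.em (G.Adj x r) with hr' | hr'
        · exact Or.inr ⟨Finset.mem_univ _, hxp, hxq, hxr, hxs, hr', h2⟩
        · exact absurd (hx'.2 h1 h2 hq') hr'
  have huAB : u ∈ A ∪ B := by
    simp only [Set.mem_insert_iff, Set.mem_singleton_iff] at hu
    push_neg at hu
    rw [Finset.mem_union, hA, Finset.mem_filter]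
    exact Or.inl ⟨Finset.mem_univ _, hu.1, hu.2.1, hu.2.2.1, hu.2.2.2, hup, huq⟩
  have hlt : (C ∪ D).card < (A ∪ B).card := by
    calc (C ∪ D).card ≤ ((A ∪ B).erase u).card := Finset.card_le_card hsub
    _ < (A ∪ B).card := Finset.card_erase_lt_of_mem huAB
  omega
end
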